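/- Let φ be a sentence of SCL or of BndSCL that is determined everywhere, i.e. in every suitable model exactly one of Eloise and Abelard has a winning strategy in the semantic game for φ (equivalently, φ ∨ ¬φ is valid in the respective semantics). Then there exists n ∈ ℕ such that φ is equivalent to its n-th approximant Φⁿ_φ: for every suitable model 𝔄, φ is true in 𝔄 (in the respective semantics) if and only if 𝔄 ⊨ Φⁿ_φ in first-order logic. In particular φ is equivalent to a first-order sentence. -/

import Mathlib

/-
Common formalization of the logics SCL (static computation logic, unbounded
game-theoretic semantics) and BndSCL (bounded semantics), following the paper
"First-order logic with self-reference".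

* Games are played on arbitrary (possibly infinite) arenas; plays are maximal
  walks; strategies are functions from finite walks (histories) to positions;
  infinite plays, and finite plays ending at a dead end where `win` holds for
  neither player, are won by nobody.
* The semantic games are formalized with positions carrying the current
  (sub)formula, an environment binding each label symbol to the labelled
  formula it most recently named (this is the standard closure rendering of
  "reference formula of a claim-symbol occurrence"), the current assignment
  and the polarity (+ = true, − = false).  The bounded game additionally
  carries a clock value.
-/

set_option autoImplicit false

universe u

/-! ## Generic two-player games on (possibly infinite) arenas -/

inductive Player : Type
  | eloise : Player
  | abelard : Player
deriving DecidableEq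

def Player.opp : Player → Player
  | .eloise => .abelard
  | .abelard => .eloise

/-- A game arena: an ownership function (corresponding to the partition
`V = V₀ ∪ V₁`), an edge relation, and a predicate telling which player (if
any) wins a play ending at a given dead-end position. -/
structure GameArena (P : Type u) where
  turn : P → Player
  edge : P → P → Prop
  win : P → Player → Prop

namespace GameArena

variable {P : Type u} (A : GameArena P)

def DeadEnd (u : P) : Prop := ∀ x, ¬ A.edge u x

/-- `w` is a finite nonempty walk whose first element is `v`. -/
def IsWalkFrom (v : P) (w : List P) : Prop :=
  w.head? = some v ∧ List.Chain' A.edge w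

/-- A finite (maximal) play from `v`: a walk whose last element is a dead end. -/
def IsFinitePlay (v : P) (w : List P) : Prop :=
  A.IsWalkFrom v w ∧ ∀ u, w.getLast? = some u → A.DeadEnd u

/-- An infinite play from `v`. -/
def IsInfPlay (v : P) (f : ℕ → P) : Prop :=
  f 0 = v ∧ ∀ n, A.edge (f n) (f (n + 1))

/-- A strategy (a function from histories to positions) of player `pl` is
legal if it always prescribes a move along an edge whenever a move exists. -/
def LegalFor (pl : Player) (v : P) (σ : List P → P) : Prop :=
  ∀ w u, A.IsWalkFrom v w → w.getLast? = some u → A.turn u = pl →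
    (∃ x, A.edge u x) → A.edge u (σ w)

/-- The strategy `σ` of player `pl` is followed in the finite play `w`. -/
def FollowsFin (pl : Player) (σ : List P → P) (w : List P) : Prop :=
  ∀ q u x, (q ++ [x]) <+: w → q.getLast? = some u → A.turn u = pl → x = σ q

/-- The strategy `σ` of player `pl` is followed in the infinite play `f`. -/
def FollowsInf (pl : Player) (σ : List P → P) (f : ℕ → P) : Prop :=
  ∀ n, A.turn (f n) = pl →
    f (n + 1) = σ (List.ofFn fun i : Fin (n + 1) => f i)

/-- `σ` is a winning strategy of player `pl` from `v`: it is legal, every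
finite maximal play following it ends in a dead end won by `pl`, and no
infinite play follows it (infinite plays are won by neither player). -/
def WinningStrategy (pl : Player) (v : P) (σ : List P → P) : Prop :=
  A.LegalFor pl v σ ∧
  (∀ w, A.IsFinitePlay v w → A.FollowsFin pl σ w →
      ∃ u, w.getLast? = some u ∧ A.win u pl) ∧
  (∀ f, A.IsInfPlay v f → ¬ A.FollowsInf pl σ f)

def HasWinningStrategy (pl : Player) (v : P) : Prop :=
  ∃ σ : List P → P, A.WinningStrategy pl v σ

end GameArena

/-- A positional strategy: its moves depend only on the current position. -/
def Positional {P : Type u} (σ : List P → P) : Prop :=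
  ∀ q q' : List P, q.getLast? = q'.getLast? → σ q = σ q'

/-! ## Syntax of SCL / BndSCL -/

/-- A purely relational vocabulary. -/
structure Vocab : Type 1 where
  Rel : Type
  arity : Rel → ℕ

/-- Formulas of SCL / BndSCL over the vocabulary `V`.  Variables and label
symbols are natural numbers; `claim L` is the claim symbol `C_L` and
`lab L φ` is the labelled formula `L φ`. -/
inductive SCLFormula (V : Vocab) : Type
  | bot : SCLFormula V
  | eq (x y : ℕ) : SCLFormula V
  | rel (R : V.Rel) (args : Fin (V.arity R) → ℕ) : SCLFormula V
  | claim (L : ℕ) : SCLFormula V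
  | not (φ : SCLFormula V) : SCLFormula V
  | and (φ ψ : SCLFormula V) : SCLFormula V
  | or (φ ψ : SCLFormula V) : SCLFormula V
  | ex (x : ℕ) (φ : SCLFormula V) : SCLFormula V
  | all (x : ℕ) (φ : SCLFormula V) : SCLFormula V
  | lab (L : ℕ) (φ : SCLFormula V) : SCLFormula V

namespace SCLFormula

variable {V : Vocab}

/-- First-order atoms. -/
def IsFOAtom : SCLFormula V → Prop
  | .bot => True
  | .eq _ _ => True
  | .rel _ _ => True
  | _ => False

/-- Purely first-order formulas (no claim symbols, no label symbols). -/
def IsFO : SCLFormula V → Prop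
  | .bot => True
  | .eq _ _ => True
  | .rel _ _ => True
  | .claim _ => False
  | .not φ => IsFO φ
  | .and φ ψ => IsFO φ ∧ IsFO ψ
  | .or φ ψ => IsFO φ ∧ IsFO ψ
  | .ex _ φ => IsFO φ
  | .all _ φ => IsFO φ
  | .lab _ _ => False

/-- Free (individual) variables. -/
def freeVars : SCLFormula V → Finset ℕ
  | .bot => ∅
  | .eq x y => {x, y}
  | .rel _ a => Finset.image a Finset.univ
  | .claim _ => ∅
  | .not φ => freeVars φ
  | .and φ ψ => freeVars φ ∪ freeVars ψ
  | .or φ ψ => freeVars φ ∪ freeVars ψ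
  | .ex x φ => freeVars φ \ {x}
  | .all x φ => freeVars φ \ {x}
  | .lab _ φ => freeVars φ

/-- All variables occurring in a formula (free or bound). -/
def vars : SCLFormula V → Finset ℕ
  | .bot => ∅
  | .eq x y => {x, y}
  | .rel _ a => Finset.image a Finset.univ
  | .claim _ => ∅
  | .not φ => vars φ
  | .and φ ψ => vars φ ∪ vars ψ
  | .or φ ψ => vars φ ∪ vars ψ
  | .ex x φ => insert x (vars φ)
  | .all x φ => insert x (vars φ)
  | .lab _ φ => vars φ

/-- Sentences: formulas with no free variables. -/
def IsSentence (φ : SCLFormula V) : Prop := freeVars φ = ∅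

end SCLFormula

/-! ## Structures and first-order (Tarski) satisfaction -/

/-- A (suitable) model for vocabulary `V`: a nonempty domain together with an
interpretation of all relation symbols. -/
structure Struct (V : Vocab) where
  Dom : Type u
  dom_nonempty : Nonempty Dom
  interp : ∀ R : V.Rel, (Fin (V.arity R) → Dom) → Prop

attribute [instance] Struct.dom_nonempty

/-- Satisfaction of atoms (false on non-atoms). -/
def atomSat {V : Vocab} (M : Struct.{u} V) (s : ℕ → M.Dom) : SCLFormula V → Prop
  | .bot => False
  | .eq x y => s x = s y
  | .rel R a => M.interp R fun i => s (a i)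
  | _ => False

/-- Standard (Tarski) first-order satisfaction.  It is only meaningful on
purely first-order formulas; claim symbols are interpreted as `False` and
label symbols are ignored. -/
def FOSat {V : Vocab} (M : Struct.{u} V) : (ℕ → M.Dom) → SCLFormula V → Prop
  | _, .bot => False
  | s, .eq x y => s x = s y
  | s, .rel R a => M.interp R fun i => s (a i)
  | _, .claim _ => False
  | s, .not φ => ¬ FOSat M s φ
  | s, .and φ ψ => FOSat M s φ ∧ FOSat M s ψ
  | s, .or φ ψ => FOSat M s φ ∨ FOSat M s ψ
  | s, .ex x φ => ∃ a : M.Dom, FOSat M (Function.update s x a) φ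
  | s, .all x φ => ∀ a : M.Dom, FOSat M (Function.update s x a) φ
  | s, .lab _ φ => FOSat M s φ

/-! ## The evaluation games -/

/-- A position of the semantic game: the current formula, the environment
recording for each label symbol `L` the reference formula `L ψ` it currently
names, the current assignment, and the polarity (`true` = `+`). -/
structure SCLPos (V : Vocab) (D : Type u) : Type u where
  form : SCLFormula V
  env : ℕ → Option (SCLFormula V)
  asg : ℕ → D
  pol : Bool

/-- Which player moves at a given position. (At positions with at most one
successor the owner is irrelevant; we let Eloise own them.) -/
def posTurn {V : Vocab} {D : Type u} (p : SCLPos V D) : Player :=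
  match p.form, p.pol with
  | .and _ _, true => .abelard
  | .and _ _, false => .eloise
  | .or _ _, true => .eloise
  | .or _ _, false => .abelard
  | .all _ _, true => .abelard
  | .all _ _, false => .eloise
  | .ex _ _, true => .eloise
  | .ex _ _, false => .abelard
  | _, _ => .eloise

/-- Who wins a play ending at a given position: at an FO-atom position,
Eloise wins iff the atom's truth value agrees with the polarity, and Abelard
wins otherwise; plays ending anywhere else (e.g. at a claim symbol with no
reference formula, or with clock value 0) are won by neither player. -/
def posWin {V : Vocab} (M : Struct.{u} V) (p : SCLPos V M.Dom) : Player → Prop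
  | .eloise => p.form.IsFOAtom ∧ (atomSat M p.asg p.form ↔ p.pol = true)
  | .abelard => p.form.IsFOAtom ∧ ¬ (atomSat M p.asg p.form ↔ p.pol = true)

/-- Moves of the unbounded evaluation game `G_∞`. -/
inductive UStep {V : Vocab} (M : Struct.{u} V) :
    SCLPos V M.Dom → SCLPos V M.Dom → Prop
  | neg (φ : SCLFormula V) (e : ℕ → Option (SCLFormula V)) (s : ℕ → M.Dom) (b : Bool) :
      UStep M ⟨.not φ, e, s, b⟩ ⟨φ, e, s, !b⟩
  | andLeft (φ ψ : SCLFormula V) (e : ℕ → Option (SCLFormula V)) (s : ℕ → M.Dom) (b : Bool) :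
      UStep M ⟨.and φ ψ, e, s, b⟩ ⟨φ, e, s, b⟩
  | andRight (φ ψ : SCLFormula V) (e : ℕ → Option (SCLFormula V)) (s : ℕ → M.Dom) (b : Bool) :
      UStep M ⟨.and φ ψ, e, s, b⟩ ⟨ψ, e, s, b⟩
  | orLeft (φ ψ : SCLFormula V) (e : ℕ → Option (SCLFormula V)) (s : ℕ → M.Dom) (b : Bool) :
      UStep M ⟨.or φ ψ, e, s, b⟩ ⟨φ, e, s, b⟩
  | orRight (φ ψ : SCLFormula V) (e : ℕ → Option (SCLFormula V)) (s : ℕ → M.Dom) (b : Bool) :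
      UStep M ⟨.or φ ψ, e, s, b⟩ ⟨ψ, e, s, b⟩
  | exStep (x : ℕ) (φ : SCLFormula V) (e : ℕ → Option (SCLFormula V)) (s : ℕ → M.Dom)
      (b : Bool) (a : M.Dom) :
      UStep M ⟨.ex x φ, e, s, b⟩ ⟨φ, e, Function.update s x a, b⟩
  | allStep (x : ℕ) (φ : SCLFormula V) (e : ℕ → Option (SCLFormula V)) (s : ℕ → M.Dom)
      (b : Bool) (a : M.Dom) :
      UStep M ⟨.all x φ, e, s, b⟩ ⟨φ, e, Function.update s x a, b⟩
  | labStep (L : ℕ) (φ : SCLFormula V) (e : ℕ → Option (SCLFormula V)) (s : ℕ → M.Dom)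
      (b : Bool) :
      UStep M ⟨.lab L φ, e, s, b⟩ ⟨φ, Function.update e L (some (.lab L φ)), s, b⟩
  | claimStep (L : ℕ) (e : ℕ → Option (SCLFormula V)) (s : ℕ → M.Dom) (b : Bool)
      (χ : SCLFormula V) (h : e L = some χ) :
      UStep M ⟨.claim L, e, s, b⟩ ⟨χ, e, s, b⟩

/-- Moves of the `n`-bounded evaluation game: positions additionally carry a
clock value, which decreases by one exactly at jumps from a claim symbol to
its reference formula; a claim-symbol position with clock value `0` is a dead
end won by neither player. -/
inductive BStep {V : Vocab} (M : Struct.{u} V) :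
    SCLPos V M.Dom × ℕ → SCLPos V M.Dom × ℕ → Prop
  | neg (φ : SCLFormula V) (e : ℕ → Option (SCLFormula V)) (s : ℕ → M.Dom) (b : Bool) (n : ℕ) :
      BStep M (⟨.not φ, e, s, b⟩, n) (⟨φ, e, s, !b⟩, n)
  | andLeft (φ ψ : SCLFormula V) (e : ℕ → Option (SCLFormula V)) (s : ℕ → M.Dom) (b : Bool)
      (n : ℕ) : BStep M (⟨.and φ ψ, e, s, b⟩, n) (⟨φ, e, s, b⟩, n)
  | andRight (φ ψ : SCLFormula V) (e : ℕ → Option (SCLFormula V)) (s : ℕ → M.Dom) (b : Bool)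
      (n : ℕ) : BStep M (⟨.and φ ψ, e, s, b⟩, n) (⟨ψ, e, s, b⟩, n)
  | orLeft (φ ψ : SCLFormula V) (e : ℕ → Option (SCLFormula V)) (s : ℕ → M.Dom) (b : Bool)
      (n : ℕ) : BStep M (⟨.or φ ψ, e, s, b⟩, n) (⟨φ, e, s, b⟩, n)
  | orRight (φ ψ : SCLFormula V) (e : ℕ → Option (SCLFormula V)) (s : ℕ → M.Dom) (b : Bool)
      (n : ℕ) : BStep M (⟨.or φ ψ, e, s, b⟩, n) (⟨ψ, e, s, b⟩, n)
  | exStep (x : ℕ) (φ : SCLFormula V) (e : ℕ → Option (SCLFormula V)) (s : ℕ → M.Dom)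
      (b : Bool) (n : ℕ) (a : M.Dom) :
      BStep M (⟨.ex x φ, e, s, b⟩, n) (⟨φ, e, Function.update s x a, b⟩, n)
  | allStep (x : ℕ) (φ : SCLFormula V) (e : ℕ → Option (SCLFormula V)) (s : ℕ → M.Dom)
      (b : Bool) (n : ℕ) (a : M.Dom) :
      BStep M (⟨.all x φ, e, s, b⟩, n) (⟨φ, e, Function.update s x a, b⟩, n)
  | labStep (L : ℕ) (φ : SCLFormula V) (e : ℕ → Option (SCLFormula V)) (s : ℕ → M.Dom)
      (b : Bool) (n : ℕ) :
      BStep M (⟨.lab L φ, e, s, b⟩, n) (⟨φ, Function.update e L (some (.lab L φ)), s, b⟩, n)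
  | claimStep (L : ℕ) (e : ℕ → Option (SCLFormula V)) (s : ℕ → M.Dom) (b : Bool)
      (χ : SCLFormula V) (n : ℕ) (h : e L = some χ) :
      BStep M (⟨.claim L, e, s, b⟩, n + 1) (⟨χ, e, s, b⟩, n)

/-- The unbounded evaluation game `G_∞(𝔄, ·, ·)` as a game arena. -/
def gameU {V : Vocab} (M : Struct.{u} V) : GameArena (SCLPos V M.Dom) where
  turn := posTurn
  edge := UStep M
  win := posWin M

/-- The bounded evaluation games `G_n(𝔄, ·, ·)` (for all clock values `n`
simultaneously) as a game arena. -/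
def gameB {V : Vocab} (M : Struct.{u} V) : GameArena (SCLPos V M.Dom × ℕ) where
  turn p := posTurn p.1
  edge := BStep M
  win p := posWin M p.1

/-- The initial position of the evaluation game for `φ` under assignment `s`:
empty environment and positive polarity. -/
def initPos {V : Vocab} {D : Type u} (φ : SCLFormula V) (s : ℕ → D) : SCLPos V D :=
  ⟨φ, fun _ => none, s, true⟩

/-- Truth under the unbounded semantics (the logic SCL):
`𝔄,s ⊨ φ` iff Eloise has a winning strategy in `G_∞(𝔄,s,φ)`. -/
def SCLTrue {V : Vocab} (M : Struct.{u} V) (s : ℕ → M.Dom) (φ : SCLFormula V) : Prop :=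
  (gameU M).HasWinningStrategy .eloise (initPos φ s)

/-! ### The bounded game `G_ω` -/

/-- Positions of the game `G_ω`: the initial position (where Abelard picks a
number `n'`), the intermediate positions (where Eloise picks some `n ≥ n'`),
and the positions of the `n`-bounded games. -/
inductive GOPos (V : Vocab) (D : Type u) : Type u
  | start : GOPos V D
  | mid (n' : ℕ) : GOPos V D
  | inner (p : SCLPos V D) (clock : ℕ) : GOPos V D

inductive GOStep {V : Vocab} (M : Struct.{u} V) (φ : SCLFormula V) (s : ℕ → M.Dom) :
    GOPos V M.Dom → GOPos V M.Dom → Prop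
  | abelardPick (n' : ℕ) : GOStep M φ s .start (.mid n')
  | eloisePick (n' n : ℕ) (h : n' ≤ n) : GOStep M φ s (.mid n') (.inner (initPos φ s) n)
  | play (p q : SCLPos V M.Dom) (m k : ℕ) (h : BStep M (p, m) (q, k)) :
      GOStep M φ s (.inner p m) (.inner q k)

def goTurn {V : Vocab} {D : Type u} : GOPos V D → Player
  | .start => .abelard
  | .mid _ => .eloise
  | .inner p _ => posTurn p

def goWin {V : Vocab} (M : Struct.{u} V) : GOPos V M.Dom → Player → Prop
  | .inner p _, pl => posWin M p pl
  | _, _ => False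

/-- The bounded evaluation game `G_ω(𝔄,s,φ)`: Abelard picks `n' ∈ ℕ`, then
Eloise picks `n ≥ n'`, and then `G_n(𝔄,s,φ)` is played. -/
def gameOmega {V : Vocab} (M : Struct.{u} V) (φ : SCLFormula V) (s : ℕ → M.Dom) :
    GameArena (GOPos V M.Dom) where
  turn := goTurn
  edge := GOStep M φ s
  win := goWin M

/-- Truth under the bounded semantics (the logic BndSCL):
`𝔄,s ⊨_ω φ` iff Eloise has a winning strategy in `G_ω(𝔄,s,φ)`. -/
def BndTrue {V : Vocab} (M : Struct.{u} V) (s : ℕ → M.Dom) (φ : SCLFormula V) : Prop :=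
  (gameOmega M φ s).HasWinningStrategy .eloise .start

/-! ## Approximants -/

/-- Auxiliary structural recursion for approximants: `k` tells what to put in
place of a claim symbol.  Label symbols are deleted (while updating the
environment), and polarity is tracked through negations. -/
def approxCore {V : Vocab}
    (k : (ℕ → Option (SCLFormula V)) → Bool → ℕ → SCLFormula V) :
    (ℕ → Option (SCLFormula V)) → Bool → SCLFormula V → SCLFormula V
  | _, _, .bot => .bot
  | _, _, .eq x y => .eq x y
  | _, _, .rel R a => .rel R a
  | e, b, .claim L => k e b L
  | e, b, .not φ => .not (approxCore k e (!b) φ)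
  | e, b, .and φ ψ => .and (approxCore k e b φ) (approxCore k e b ψ)
  | e, b, .or φ ψ => .or (approxCore k e b φ) (approxCore k e b ψ)
  | e, b, .ex x φ => .ex x (approxCore k e b φ)
  | e, b, .all x φ => .all x (approxCore k e b φ)
  | e, b, .lab L φ => approxCore k (Function.update e L (some (.lab L φ))) b φ

/-- `approx n e b φ` unfolds each claim symbol of `φ` (in environment `e`,
under polarity `b`) through `n` jumps to reference formulas; claim symbols
reached with exhausted budget (or with no reference formula) are replaced by
`⊥` at positive occurrences and `⊤` (i.e. `¬⊥`) at negative occurrences, and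
all label symbols are deleted. -/
def approx {V : Vocab} : ℕ → (ℕ → Option (SCLFormula V)) → Bool → SCLFormula V → SCLFormula V
  | 0 => approxCore fun _ b _ => if b then .bot else .not .bot
  | n + 1 => approxCore fun e b L =>
      match e L with
      | some χ => approx n e b χ
      | none => if b then .bot else .not .bot

/-- The `n`-th approximant `Φⁿ_φ` of `φ`: the first-order formula obtained
from the `n`-th unfolding of `φ` by deleting all label symbols and replacing
positive claim occurrences by `⊥` and negative ones by `⊤`. -/
def approximant {V : Vocab} (φ : SCLFormula V) (n : ℕ) : SCLFormula V :=
  approx n (fun _ => none) true φ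


/-! ## Auxiliary development -/

section Aux

open SCLFormula

variable {V : Vocab}

/-- Generic approximant with default claim replacement `d`. -/
def APX (d : Bool → SCLFormula V) : ℕ → (ℕ → Option (SCLFormula V)) → Bool → SCLFormula V → SCLFormula V
  | 0 => approxCore fun _ b _ => d b
  | n + 1 => approxCore fun e b L =>
      match e L with
      | some χ => APX d n e b χ
      | none => d b

/-- Eloise's defaults. -/
def dE (V : Vocab) : Bool → SCLFormula V := fun b => if b then .bot else .not .bot
/-- Abelard's defaults. -/
def dA (V : Vocab) : Bool → SCLFormula V := fun b => if b then .not .bot else .bot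

lemma approxCore_congr (k₁ k₂ : (ℕ → Option (SCLFormula V)) → Bool → ℕ → SCLFormula V)
    (h : ∀ e b L, k₁ e b L = k₂ e b L) :
    ∀ ψ e b, approxCore k₁ e b ψ = approxCore k₂ e b ψ := by
  intro ψ
  induction ψ with
  | bot => intro e b; rfl
  | eq x y => intro e b; rfl
  | rel R a => intro e b; rfl
  | claim L => intro e b; exact h e b L
  | not φ ih => intro e b; simp [approxCore, ih]
  | and φ ψ ih1 ih2 => intro e b; simp [approxCore, ih1, ih2]
  | or φ ψ ih1 ih2 => intro e b; simp [approxCore, ih1, ih2]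
  | ex x φ ih => intro e b; simp [approxCore, ih]
  | all x φ ih => intro e b; simp [approxCore, ih]
  | lab L φ ih => intro e b; simp [approxCore, ih]

lemma approx_eq_APX : ∀ (n : ℕ) (e : ℕ → Option (SCLFormula V)) (b : Bool) (ψ : SCLFormula V),
    approx n e b ψ = APX (dE V) n e b ψ := by
  intro n
  induction n with
  | zero => intro e b ψ; rfl
  | succ n ih =>
    intro e b ψ
    show approxCore _ e b ψ = approxCore _ e b ψ
    apply approxCore_congr
    intro e' b' L
    cases h : e' L with
    | none => simp [h, dE]
    | some χ => simp [h, ih, dE]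

@[simp] lemma APX_bot (d : Bool → SCLFormula V) (n e b) : APX d n e b .bot = .bot := by
  cases n <;> rfl
@[simp] lemma APX_eq (d : Bool → SCLFormula V) (n e b x y) : APX d n e b (.eq x y) = .eq x y := by
  cases n <;> rfl
@[simp] lemma APX_rel (d : Bool → SCLFormula V) (n e b R a) : APX d n e b (.rel R a) = .rel R a := by
  cases n <;> rfl
@[simp] lemma APX_not (d : Bool → SCLFormula V) (n e b φ) :
    APX d n e b (.not φ) = .not (APX d n e (!b) φ) := by cases n <;> rfl
@[simp] lemma APX_and (d : Bool → SCLFormula V) (n e b φ ψ) :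
    APX d n e b (.and φ ψ) = .and (APX d n e b φ) (APX d n e b ψ) := by cases n <;> rfl
@[simp] lemma APX_or (d : Bool → SCLFormula V) (n e b φ ψ) :
    APX d n e b (.or φ ψ) = .or (APX d n e b φ) (APX d n e b ψ) := by cases n <;> rfl
@[simp] lemma APX_ex (d : Bool → SCLFormula V) (n e b x φ) :
    APX d n e b (.ex x φ) = .ex x (APX d n e b φ) := by cases n <;> rfl
@[simp] lemma APX_all (d : Bool → SCLFormula V) (n e b x φ) :
    APX d n e b (.all x φ) = .all x (APX d n e b φ) := by cases n <;> rfl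
@[simp] lemma APX_lab (d : Bool → SCLFormula V) (n e b L φ) :
    APX d n e b (.lab L φ) = APX d n (Function.update e L (some (.lab L φ))) b φ := by
  cases n <;> rfl
@[simp] lemma APX_claim_zero (d : Bool → SCLFormula V) (e b L) :
    APX d 0 e b (.claim L) = d b := rfl
lemma APX_claim_succ_some (d : Bool → SCLFormula V) (n e b L χ) (h : e L = some χ) :
    APX d (n+1) e b (.claim L) = APX d n e b χ := by
  show (match e L with | some χ => APX d n e b χ | none => d b) = _
  rw [h]
lemma APX_claim_succ_none (d : Bool → SCLFormula V) (n e b L) (h : e L = none) :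
    APX d (n+1) e b (.claim L) = d b := by
  show (match e L with | some χ => APX d n e b χ | none => d b) = _
  rw [h]

lemma APX_isFO (d : Bool → SCLFormula V) (hd : ∀ b, (d b).IsFO) :
    ∀ (n : ℕ) (ψ : SCLFormula V) (e b), (APX d n e b ψ).IsFO := by
  intro n
  induction n with
  | zero =>
    intro ψ
    induction ψ with
    | bot => intro e b; trivial
    | eq x y => intro e b; trivial
    | rel R a => intro e b; trivial
    | claim L => intro e b; exact hd b
    | not φ ih => intro e b; simpa [IsFO] using ih e (!b)
    | and φ ψ ih1 ih2 => intro e b; exact ⟨ih1 e b, ih2 e b⟩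
    | or φ ψ ih1 ih2 => intro e b; exact ⟨ih1 e b, ih2 e b⟩
    | ex x φ ih => intro e b; simpa [IsFO] using ih e b
    | all x φ ih => intro e b; simpa [IsFO] using ih e b
    | lab L φ ih => intro e b; simpa [IsFO] using ih _ b
  | succ n ihn =>
    intro ψ
    induction ψ with
    | bot => intro e b; trivial
    | eq x y => intro e b; trivial
    | rel R a => intro e b; trivial
    | claim L => intro e b
                 cases h : e L with
                 | none => rw [APX_claim_succ_none d n e b L h]; exact hd b
                 | some χ => rw [APX_claim_succ_some d n e b L χ h]; exact ihn χ e b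
    | not φ ih => intro e b; simpa [IsFO] using ih e (!b)
    | and φ ψ ih1 ih2 => intro e b; exact ⟨ih1 e b, ih2 e b⟩
    | or φ ψ ih1 ih2 => intro e b; exact ⟨ih1 e b, ih2 e b⟩
    | ex x φ ih => intro e b; simpa [IsFO] using ih e b
    | all x φ ih => intro e b; simpa [IsFO] using ih e b
    | lab L φ ih => intro e b; simpa [IsFO] using ih _ b

lemma dE_isFO : ∀ b, (dE V b).IsFO := by intro b; cases b <;> trivial
lemma dA_isFO : ∀ b, (dA V b).IsFO := by intro b; cases b <;> trivial

end Aux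


section Good

open SCLFormula

variable {V : Vocab}

/-- Level-`n` value of a game position from Eloise's viewpoint. -/
def EG (M : Struct.{u} V) (n : ℕ) (e : ℕ → Option (SCLFormula V)) (s : ℕ → M.Dom)
    (b : Bool) (ψ : SCLFormula V) : Prop :=
  FOSat M s (APX (dE V) n e b ψ) ↔ b = true

/-- Level-`n` value of a game position from Abelard's viewpoint. -/
def AG (M : Struct.{u} V) (n : ℕ) (e : ℕ → Option (SCLFormula V)) (s : ℕ → M.Dom)
    (b : Bool) (ψ : SCLFormula V) : Prop :=
  FOSat M s (APX (dA V) n e b ψ) ↔ b = false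

variable {M : Struct.{u} V}

section EGlem
variable (n : ℕ) (e : ℕ → Option (SCLFormula V)) (s : ℕ → M.Dom) (b : Bool)

lemma EG_bot : EG M n e s b .bot ↔ b = false := by
  cases b <;> simp [EG, FOSat]
lemma EG_eq (x y : ℕ) : EG M n e s b (.eq x y) ↔ ((s x = s y) ↔ b = true) := by
  simp [EG, FOSat]
lemma EG_rel (R : V.Rel) (a : Fin (V.arity R) → ℕ) :
    EG M n e s b (.rel R a) ↔ ((M.interp R fun i => s (a i)) ↔ b = true) := by
  simp [EG, FOSat]
lemma EG_not (φ : SCLFormula V) : EG M n e s b (.not φ) ↔ EG M n e s (!b) φ := by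
  cases b <;> simp [EG, FOSat] <;> try tauto
lemma EG_and_t (φ ψ : SCLFormula V) :
    EG M n e s true (.and φ ψ) ↔ (EG M n e s true φ ∧ EG M n e s true ψ) := by
  simp [EG, FOSat]
lemma EG_and_f (φ ψ : SCLFormula V) :
    EG M n e s false (.and φ ψ) ↔ (EG M n e s false φ ∨ EG M n e s false ψ) := by
  simp [EG, FOSat]; try tauto
lemma EG_or_t (φ ψ : SCLFormula V) :
    EG M n e s true (.or φ ψ) ↔ (EG M n e s true φ ∨ EG M n e s true ψ) := by
  simp [EG, FOSat]
lemma EG_or_f (φ ψ : SCLFormula V) :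
    EG M n e s false (.or φ ψ) ↔ (EG M n e s false φ ∧ EG M n e s false ψ) := by
  simp [EG, FOSat]; try tauto
lemma EG_ex_t (x : ℕ) (φ : SCLFormula V) :
    EG M n e s true (.ex x φ) ↔ ∃ a, EG M n e (Function.update s x a) true φ := by
  simp [EG, FOSat]
lemma EG_ex_f (x : ℕ) (φ : SCLFormula V) :
    EG M n e s false (.ex x φ) ↔ ∀ a, EG M n e (Function.update s x a) false φ := by
  simp [EG, FOSat]
lemma EG_all_t (x : ℕ) (φ : SCLFormula V) :
    EG M n e s true (.all x φ) ↔ ∀ a, EG M n e (Function.update s x a) true φ := by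
  simp [EG, FOSat]
lemma EG_all_f (x : ℕ) (φ : SCLFormula V) :
    EG M n e s false (.all x φ) ↔ ∃ a, EG M n e (Function.update s x a) false φ := by
  simp [EG, FOSat]
lemma EG_lab (L : ℕ) (φ : SCLFormula V) :
    EG M n e s b (.lab L φ) ↔ EG M n (Function.update e L (some (.lab L φ))) s b φ := by
  simp [EG]
lemma EG_claim_zero (L : ℕ) : ¬ EG M 0 e s b (.claim L) := by
  cases b <;> simp [EG, FOSat, dE]
lemma EG_claim_none (L : ℕ) (h : e L = none) : ¬ EG M n e s b (.claim L) := by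
  cases n with
  | zero => exact EG_claim_zero e s b L
  | succ n => cases b <;> simp [EG, APX_claim_succ_none _ _ _ _ _ h, FOSat, dE]
lemma EG_claim_succ (L : ℕ) (χ : SCLFormula V) (h : e L = some χ) :
    EG M (n+1) e s b (.claim L) ↔ EG M n e s b χ := by
  simp [EG, APX_claim_succ_some _ _ _ _ _ _ h]

end EGlem

section AGlem
variable (n : ℕ) (e : ℕ → Option (SCLFormula V)) (s : ℕ → M.Dom) (b : Bool)

lemma AG_bot : AG M n e s b .bot ↔ b = true := by
  cases b <;> simp [AG, FOSat]
lemma AG_eq (x y : ℕ) : AG M n e s b (.eq x y) ↔ ((s x = s y) ↔ b = false) := by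
  simp [AG, FOSat]
lemma AG_rel (R : V.Rel) (a : Fin (V.arity R) → ℕ) :
    AG M n e s b (.rel R a) ↔ ((M.interp R fun i => s (a i)) ↔ b = false) := by
  simp [AG, FOSat]
lemma AG_not (φ : SCLFormula V) : AG M n e s b (.not φ) ↔ AG M n e s (!b) φ := by
  cases b <;> simp [AG, FOSat] <;> try tauto
lemma AG_and_t (φ ψ : SCLFormula V) :
    AG M n e s true (.and φ ψ) ↔ (AG M n e s true φ ∨ AG M n e s true ψ) := by
  simp [AG, FOSat]; try tauto
lemma AG_and_f (φ ψ : SCLFormula V) :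
    AG M n e s false (.and φ ψ) ↔ (AG M n e s false φ ∧ AG M n e s false ψ) := by
  simp [AG, FOSat]
lemma AG_or_t (φ ψ : SCLFormula V) :
    AG M n e s true (.or φ ψ) ↔ (AG M n e s true φ ∧ AG M n e s true ψ) := by
  simp [AG, FOSat]; try tauto
lemma AG_or_f (φ ψ : SCLFormula V) :
    AG M n e s false (.or φ ψ) ↔ (AG M n e s false φ ∨ AG M n e s false ψ) := by
  simp [AG, FOSat]
lemma AG_ex_t (x : ℕ) (φ : SCLFormula V) :
    AG M n e s true (.ex x φ) ↔ ∀ a, AG M n e (Function.update s x a) true φ := by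
  simp [AG, FOSat]
lemma AG_ex_f (x : ℕ) (φ : SCLFormula V) :
    AG M n e s false (.ex x φ) ↔ ∃ a, AG M n e (Function.update s x a) false φ := by
  simp [AG, FOSat]
lemma AG_all_t (x : ℕ) (φ : SCLFormula V) :
    AG M n e s true (.all x φ) ↔ ∃ a, AG M n e (Function.update s x a) true φ := by
  simp [AG, FOSat]
lemma AG_all_f (x : ℕ) (φ : SCLFormula V) :
    AG M n e s false (.all x φ) ↔ ∀ a, AG M n e (Function.update s x a) false φ := by
  simp [AG, FOSat]
lemma AG_lab (L : ℕ) (φ : SCLFormula V) :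
    AG M n e s b (.lab L φ) ↔ AG M n (Function.update e L (some (.lab L φ))) s b φ := by
  simp [AG]
lemma AG_claim_zero (L : ℕ) : ¬ AG M 0 e s b (.claim L) := by
  cases b <;> simp [AG, FOSat, dA]
lemma AG_claim_none (L : ℕ) (h : e L = none) : ¬ AG M n e s b (.claim L) := by
  cases n with
  | zero => exact AG_claim_zero e s b L
  | succ n => cases b <;> simp [AG, APX_claim_succ_none _ _ _ _ _ h, FOSat, dA]
lemma AG_claim_succ (L : ℕ) (χ : SCLFormula V) (h : e L = some χ) :
    AG M (n+1) e s b (.claim L) ↔ AG M n e s b χ := by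
  simp [AG, APX_claim_succ_some _ _ _ _ _ _ h]

end AGlem

lemma EG_mono : ∀ (n : ℕ) (ψ : SCLFormula V) (e : ℕ → Option (SCLFormula V)) (s : ℕ → M.Dom)
    (b : Bool), EG M n e s b ψ → EG M (n+1) e s b ψ := by
  intro n
  induction n with
  | zero =>
    intro ψ
    induction ψ with
    | bot => intro e s b; simp [EG_bot]
    | eq x y => intro e s b; simp [EG_eq]
    | rel R a => intro e s b; simp [EG_rel]
    | claim L => intro e s b h; exact absurd h (EG_claim_zero e s b L)
    | not φ ih => intro e s b; rw [EG_not, EG_not]; exact ih e s (!b)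
    | and φ ψ ih1 ih2 =>
      intro e s b
      cases b
      · rw [EG_and_f, EG_and_f]; rintro (h | h); exacts [Or.inl (ih1 e s false h), Or.inr (ih2 e s false h)]
      · rw [EG_and_t, EG_and_t]; rintro ⟨h1, h2⟩; exact ⟨ih1 e s true h1, ih2 e s true h2⟩
    | or φ ψ ih1 ih2 =>
      intro e s b
      cases b
      · rw [EG_or_f, EG_or_f]; rintro ⟨h1, h2⟩; exact ⟨ih1 e s false h1, ih2 e s false h2⟩
      · rw [EG_or_t, EG_or_t]; rintro (h | h); exacts [Or.inl (ih1 e s true h), Or.inr (ih2 e s true h)]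
    | ex x φ ih =>
      intro e s b
      cases b
      · rw [EG_ex_f, EG_ex_f]; intro h a; exact ih e _ false (h a)
      · rw [EG_ex_t, EG_ex_t]; rintro ⟨a, h⟩; exact ⟨a, ih e _ true h⟩
    | all x φ ih =>
      intro e s b
      cases b
      · rw [EG_all_f, EG_all_f]; rintro ⟨a, h⟩; exact ⟨a, ih e _ false h⟩
      · rw [EG_all_t, EG_all_t]; intro h a; exact ih e _ true (h a)
    | lab L φ ih => intro e s b; rw [EG_lab, EG_lab]; exact ih _ s b
  | succ n ihn =>
    intro ψ
    induction ψ with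
    | bot => intro e s b; simp [EG_bot]
    | eq x y => intro e s b; simp [EG_eq]
    | rel R a => intro e s b; simp [EG_rel]
    | claim L =>
      intro e s b h
      cases hL : e L with
      | none => exact absurd h (EG_claim_none _ _ _ _ _ hL)
      | some χ =>
        rw [EG_claim_succ _ _ _ _ _ _ hL] at h
        rw [EG_claim_succ _ _ _ _ _ _ hL]
        exact ihn χ e s b h
    | not φ ih => intro e s b; rw [EG_not, EG_not]; exact ih e s (!b)
    | and φ ψ ih1 ih2 =>
      intro e s b
      cases b
      · rw [EG_and_f, EG_and_f]; rintro (h | h); exacts [Or.inl (ih1 e s false h), Or.inr (ih2 e s false h)]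
      · rw [EG_and_t, EG_and_t]; rintro ⟨h1, h2⟩; exact ⟨ih1 e s true h1, ih2 e s true h2⟩
    | or φ ψ ih1 ih2 =>
      intro e s b
      cases b
      · rw [EG_or_f, EG_or_f]; rintro ⟨h1, h2⟩; exact ⟨ih1 e s false h1, ih2 e s false h2⟩
      · rw [EG_or_t, EG_or_t]; rintro (h | h); exacts [Or.inl (ih1 e s true h), Or.inr (ih2 e s true h)]
    | ex x φ ih =>
      intro e s b
      cases b
      · rw [EG_ex_f, EG_ex_f]; intro h a; exact ih e _ false (h a)
      · rw [EG_ex_t, EG_ex_t]; rintro ⟨a, h⟩; exact ⟨a, ih e _ true h⟩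
    | all x φ ih =>
      intro e s b
      cases b
      · rw [EG_all_f, EG_all_f]; rintro ⟨a, h⟩; exact ⟨a, ih e _ false h⟩
      · rw [EG_all_t, EG_all_t]; intro h a; exact ih e _ true (h a)
    | lab L φ ih => intro e s b; rw [EG_lab, EG_lab]; exact ih _ s b

lemma EG_mono_le {n m : ℕ} (h : n ≤ m) {ψ : SCLFormula V} {e} {s : ℕ → M.Dom} {b} :
    EG M n e s b ψ → EG M m e s b ψ := by
  induction h with
  | refl => exact id
  | step h ih => exact fun hh => EG_mono _ _ _ _ _ (ih hh)

lemma AG_mono : ∀ (n : ℕ) (ψ : SCLFormula V) (e : ℕ → Option (SCLFormula V)) (s : ℕ → M.Dom)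
    (b : Bool), AG M n e s b ψ → AG M (n+1) e s b ψ := by
  intro n
  induction n with
  | zero =>
    intro ψ
    induction ψ with
    | bot => intro e s b; simp [AG_bot]
    | eq x y => intro e s b; simp [AG_eq]
    | rel R a => intro e s b; simp [AG_rel]
    | claim L => intro e s b h; exact absurd h (AG_claim_zero e s b L)
    | not φ ih => intro e s b; rw [AG_not, AG_not]; exact ih e s (!b)
    | and φ ψ ih1 ih2 =>
      intro e s b
      cases b
      · rw [AG_and_f, AG_and_f]; rintro ⟨h1, h2⟩; exact ⟨ih1 e s false h1, ih2 e s false h2⟩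
      · rw [AG_and_t, AG_and_t]; rintro (h | h); exacts [Or.inl (ih1 e s true h), Or.inr (ih2 e s true h)]
    | or φ ψ ih1 ih2 =>
      intro e s b
      cases b
      · rw [AG_or_f, AG_or_f]; rintro (h | h); exacts [Or.inl (ih1 e s false h), Or.inr (ih2 e s false h)]
      · rw [AG_or_t, AG_or_t]; rintro ⟨h1, h2⟩; exact ⟨ih1 e s true h1, ih2 e s true h2⟩
    | ex x φ ih =>
      intro e s b
      cases b
      · rw [AG_ex_f, AG_ex_f]; rintro ⟨a, h⟩; exact ⟨a, ih e _ false h⟩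
      · rw [AG_ex_t, AG_ex_t]; intro h a; exact ih e _ true (h a)
    | all x φ ih =>
      intro e s b
      cases b
      · rw [AG_all_f, AG_all_f]; intro h a; exact ih e _ false (h a)
      · rw [AG_all_t, AG_all_t]; rintro ⟨a, h⟩; exact ⟨a, ih e _ true h⟩
    | lab L φ ih => intro e s b; rw [AG_lab, AG_lab]; exact ih _ s b
  | succ n ihn =>
    intro ψ
    induction ψ with
    | bot => intro e s b; simp [AG_bot]
    | eq x y => intro e s b; simp [AG_eq]
    | rel R a => intro e s b; simp [AG_rel]
    | claim L =>
      intro e s b h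
      cases hL : e L with
      | none => exact absurd h (AG_claim_none _ _ _ _ _ hL)
      | some χ =>
        rw [AG_claim_succ _ _ _ _ _ _ hL] at h
        rw [AG_claim_succ _ _ _ _ _ _ hL]
        exact ihn χ e s b h
    | not φ ih => intro e s b; rw [AG_not, AG_not]; exact ih e s (!b)
    | and φ ψ ih1 ih2 =>
      intro e s b
      cases b
      · rw [AG_and_f, AG_and_f]; rintro ⟨h1, h2⟩; exact ⟨ih1 e s false h1, ih2 e s false h2⟩
      · rw [AG_and_t, AG_and_t]; rintro (h | h); exacts [Or.inl (ih1 e s true h), Or.inr (ih2 e s true h)]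
    | or φ ψ ih1 ih2 =>
      intro e s b
      cases b
      · rw [AG_or_f, AG_or_f]; rintro (h | h); exacts [Or.inl (ih1 e s false h), Or.inr (ih2 e s false h)]
      · rw [AG_or_t, AG_or_t]; rintro ⟨h1, h2⟩; exact ⟨ih1 e s true h1, ih2 e s true h2⟩
    | ex x φ ih =>
      intro e s b
      cases b
      · rw [AG_ex_f, AG_ex_f]; rintro ⟨a, h⟩; exact ⟨a, ih e _ false h⟩
      · rw [AG_ex_t, AG_ex_t]; intro h a; exact ih e _ true (h a)
    | all x φ ih =>
      intro e s b
      cases b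
      · rw [AG_all_f, AG_all_f]; intro h a; exact ih e _ false (h a)
      · rw [AG_all_t, AG_all_t]; rintro ⟨a, h⟩; exact ⟨a, ih e _ true h⟩
    | lab L φ ih => intro e s b; rw [AG_lab, AG_lab]; exact ih _ s b

lemma AG_mono_le {n m : ℕ} (h : n ≤ m) {ψ : SCLFormula V} {e} {s : ℕ → M.Dom} {b} :
    AG M n e s b ψ → AG M m e s b ψ := by
  induction h with
  | refl => exact id
  | step h ih => exact fun hh => AG_mono _ _ _ _ _ (ih hh)

/-- Eloise's and Abelard's values are mutually exclusive. -/
lemma EG_AG_false : ∀ (n m : ℕ) (ψ : SCLFormula V) (e : ℕ → Option (SCLFormula V))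
    (s : ℕ → M.Dom) (b : Bool), EG M n e s b ψ → AG M m e s b ψ → False := by
  intro n
  induction n with
  | zero =>
    intro m ψ
    induction ψ generalizing m with
    | bot => intro e s b h1 h2; rw [EG_bot] at h1; rw [AG_bot] at h2; simp [h1] at h2
    | eq x y => intro e s b h1 h2; rw [EG_eq] at h1; rw [AG_eq] at h2
                cases b <;> simp_all
    | rel R a => intro e s b h1 h2; rw [EG_rel] at h1; rw [AG_rel] at h2
                 cases b <;> simp_all
    | claim L => intro e s b h1 _; exact absurd h1 (EG_claim_zero e s b L)
    | not φ ih => intro e s b h1 h2; rw [EG_not] at h1; rw [AG_not] at h2; exact ih m e s (!b) h1 h2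
    | and φ ψ ih1 ih2 =>
      intro e s b h1 h2
      cases b
      · rw [EG_and_f] at h1; rw [AG_and_f] at h2
        rcases h1 with h1 | h1
        exacts [ih1 m e s false h1 h2.1, ih2 m e s false h1 h2.2]
      · rw [EG_and_t] at h1; rw [AG_and_t] at h2
        rcases h2 with h2 | h2
        exacts [ih1 m e s true h1.1 h2, ih2 m e s true h1.2 h2]
    | or φ ψ ih1 ih2 =>
      intro e s b h1 h2
      cases b
      · rw [EG_or_f] at h1; rw [AG_or_f] at h2
        rcases h2 with h2 | h2
        exacts [ih1 m e s false h1.1 h2, ih2 m e s false h1.2 h2]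
      · rw [EG_or_t] at h1; rw [AG_or_t] at h2
        rcases h1 with h1 | h1
        exacts [ih1 m e s true h1 h2.1, ih2 m e s true h1 h2.2]
    | ex x φ ih =>
      intro e s b h1 h2
      cases b
      · rw [EG_ex_f] at h1; rw [AG_ex_f] at h2
        rcases h2 with ⟨a, h2⟩; exact ih m e _ false (h1 a) h2
      · rw [EG_ex_t] at h1; rw [AG_ex_t] at h2
        rcases h1 with ⟨a, h1⟩; exact ih m e _ true h1 (h2 a)
    | all x φ ih =>
      intro e s b h1 h2
      cases b
      · rw [EG_all_f] at h1; rw [AG_all_f] at h2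
        rcases h1 with ⟨a, h1⟩; exact ih m e _ false h1 (h2 a)
      · rw [EG_all_t] at h1; rw [AG_all_t] at h2
        rcases h2 with ⟨a, h2⟩; exact ih m e _ true (h1 a) h2
    | lab L φ ih => intro e s b h1 h2; rw [EG_lab] at h1; rw [AG_lab] at h2; exact ih m _ s b h1 h2
  | succ n ihn =>
    intro m ψ
    induction ψ generalizing m with
    | bot => intro e s b h1 h2; rw [EG_bot] at h1; rw [AG_bot] at h2; simp [h1] at h2
    | eq x y => intro e s b h1 h2; rw [EG_eq] at h1; rw [AG_eq] at h2
                cases b <;> simp_all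
    | rel R a => intro e s b h1 h2; rw [EG_rel] at h1; rw [AG_rel] at h2
                 cases b <;> simp_all
    | claim L =>
      intro e s b h1 h2
      cases hL : e L with
      | none => exact absurd h1 (EG_claim_none _ _ _ _ _ hL)
      | some χ =>
        rw [EG_claim_succ _ _ _ _ _ _ hL] at h1
        cases m with
        | zero => exact absurd h2 (AG_claim_zero e s b L)
        | succ m =>
          rw [AG_claim_succ _ _ _ _ _ _ hL] at h2
          exact ihn m χ e s b h1 h2
    | not φ ih => intro e s b h1 h2; rw [EG_not] at h1; rw [AG_not] at h2; exact ih m e s (!b) h1 h2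
    | and φ ψ ih1 ih2 =>
      intro e s b h1 h2
      cases b
      · rw [EG_and_f] at h1; rw [AG_and_f] at h2
        rcases h1 with h1 | h1
        exacts [ih1 m e s _ h1 h2.1, ih2 m e s _ h1 h2.2]
      · rw [EG_and_t] at h1; rw [AG_and_t] at h2
        rcases h2 with h2 | h2
        exacts [ih1 m e s _ h1.1 h2, ih2 m e s _ h1.2 h2]
    | or φ ψ ih1 ih2 =>
      intro e s b h1 h2
      cases b
      · rw [EG_or_f] at h1; rw [AG_or_f] at h2
        rcases h2 with h2 | h2
        exacts [ih1 m e s _ h1.1 h2, ih2 m e s _ h1.2 h2]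
      · rw [EG_or_t] at h1; rw [AG_or_t] at h2
        rcases h1 with h1 | h1
        exacts [ih1 m e s _ h1 h2.1, ih2 m e s _ h1 h2.2]
    | ex x φ ih =>
      intro e s b h1 h2
      cases b
      · rw [EG_ex_f] at h1; rw [AG_ex_f] at h2
        rcases h2 with ⟨a, h2⟩; exact ih m e _ _ (h1 a) h2
      · rw [EG_ex_t] at h1; rw [AG_ex_t] at h2
        rcases h1 with ⟨a, h1⟩; exact ih m e _ _ h1 (h2 a)
    | all x φ ih =>
      intro e s b h1 h2
      cases b
      · rw [EG_all_f] at h1; rw [AG_all_f] at h2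
        rcases h1 with ⟨a, h1⟩; exact ih m e _ _ h1 (h2 a)
      · rw [EG_all_t] at h1; rw [AG_all_t] at h2
        rcases h2 with ⟨a, h2⟩; exact ih m e _ _ (h1 a) h2
    | lab L φ ih => intro e s b h1 h2; rw [EG_lab] at h1; rw [AG_lab] at h2; exact ih m _ s b h1 h2

end Good


/-! ## Abstract game lemmas -/

section ListAux

variable {α : Type u}

lemma mem_of_getLast?' {l : List α} {a : α} (h : l.getLast? = some a) : a ∈ l := by
  obtain ⟨hne, rfl⟩ := List.mem_getLast?_eq_getLast (l := l) (by rw [h]; rfl)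
  exact List.getLast_mem hne

lemma concat_prefix_concat {l₁ l₂ : List α} {a b : α}
    (h : l₁ ++ [a] <+: l₂ ++ [b]) : l₁ ++ [a] <+: l₂ ∨ (l₁ = l₂ ∧ a = b) := by
  obtain ⟨t, ht⟩ := h
  rcases List.eq_nil_or_concat t with rfl | ⟨t', c, rfl⟩
  · rw [List.append_nil] at ht
    obtain ⟨h1, h2⟩ := List.append_inj' ht rfl
    exact Or.inr ⟨h1, by simpa using h2⟩
  · left
    have h2 : (l₁ ++ [a] ++ t') ++ [c] = l₂ ++ [b] := by
      rw [List.append_assoc (l₁ ++ [a]) t' [c]]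
      simpa [List.concat_eq_append] using ht
    obtain ⟨h3, _⟩ := List.append_inj' h2 rfl
    exact ⟨t', h3⟩

lemma ofFn_snoc (f : ℕ → α) (n : ℕ) :
    (List.ofFn fun i : Fin (n+2) => f i) = (List.ofFn fun i : Fin (n+1) => f i) ++ [f (n+1)] := by
  rw [List.ofFn_succ']
  simp only [List.concat_eq_append, Fin.coe_castSucc, Fin.val_last]

lemma head?_append_left {w : List α} (x : α) (h : w ≠ []) : (w ++ [x]).head? = w.head? := by
  cases w with
  | nil => exact absurd rfl h
  | cons a t => rfl

end ListAux

namespace GameArena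

variable {P : Type u} {A : GameArena P}

lemma IsWalkFrom.ne_nil {v : P} {w : List P} (h : A.IsWalkFrom v w) : w ≠ [] := by
  intro hw
  rw [hw] at h
  exact absurd h.1 (by simp)

lemma isWalkFrom_singleton (v : P) : A.IsWalkFrom v [v] := ⟨rfl, List.isChain_singleton v⟩

lemma IsWalkFrom.snoc {v u x : P} {w : List P} (h : A.IsWalkFrom v w)
    (hu : w.getLast? = some u) (hx : A.edge u x) : A.IsWalkFrom v (w ++ [x]) := by
  refine ⟨?_, ?_⟩
  · rw [head?_append_left x h.ne_nil]; exact h.1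
  · show List.IsChain _ _; rw [List.isChain_append]
    refine ⟨h.2, List.isChain_singleton x, ?_⟩
    intro y hy z hz
    rw [hu] at hy
    cases hy
    cases hz
    exact hx

lemma IsWalkFrom.getLast?_eq_some {v : P} {w : List P} (h : A.IsWalkFrom v w) :
    ∃ u, w.getLast? = some u := ⟨_, List.getLast?_eq_getLast_of_ne_nil h.ne_nil⟩

lemma IsWalkFrom.of_snoc {v x : P} {w : List P} (h : A.IsWalkFrom v (w ++ [x])) (hw : w ≠ []) :
    A.IsWalkFrom v w ∧ ∃ u, w.getLast? = some u ∧ A.edge u x := by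
  obtain ⟨h1, h2⟩ := h
  rw [head?_append_left x hw] at h1
  change List.IsChain _ _ at h2
  rw [List.isChain_append] at h2
  obtain ⟨hc, _, hlink⟩ := h2
  refine ⟨⟨h1, hc⟩, w.getLast hw, List.getLast?_eq_getLast_of_ne_nil hw, ?_⟩
  exact hlink _ (by rw [List.getLast?_eq_getLast_of_ne_nil hw]; rfl) x rfl

lemma followsFin_singleton {pl : Player} {σ : List P → P} (x : P) :
    A.FollowsFin pl σ [x] := by
  intro q u y hq hu ht
  have hlen := hq.length_le
  simp only [List.length_append, List.length_singleton, List.length_cons] at hlen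
  have : q = [] := List.length_eq_zero_iff.mp (by omega)
  subst this
  exact absurd hu (by simp)

lemma FollowsFin.of_prefix {pl : Player} {σ : List P → P} {w w' : List P}
    (h : A.FollowsFin pl σ w') (hp : w <+: w') : A.FollowsFin pl σ w :=
  fun q u x hq hu ht => h q u x (hq.trans hp) hu ht

lemma followsFin_snoc {pl : Player} {σ : List P → P} {w : List P} {x : P}
    (h1 : A.FollowsFin pl σ w)
    (h2 : ∀ u, w.getLast? = some u → A.turn u = pl → x = σ w) :
    A.FollowsFin pl σ (w ++ [x]) := by
  intro q u y hq hu ht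
  rcases concat_prefix_concat hq with hq' | ⟨rfl, rfl⟩
  · exact h1 q u y hq' hu ht
  · exact h2 u hu ht

lemma FollowsFin.last_eq {pl : Player} {σ : List P → P} {w : List P} {x u : P}
    (h : A.FollowsFin pl σ (w ++ [x])) (hu : w.getLast? = some u) (ht : A.turn u = pl) :
    x = σ w := h w u x (List.prefix_refl _) hu ht

end GameArena

section Spoiler

variable {P : Type u}

open Classical in
/-- The next move of the spoiling quasi-strategy. -/
noncomputable def spoilStep (A : GameArena P) (pl : Player) (R : P → Prop) (σ : List P → P)
    (v : P) (w : List P) : P :=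
  if A.turn (w.getLastD v) = pl then σ w
  else if h : ∃ q, A.edge (w.getLastD v) q ∧ R q then h.choose
  else σ w

open Classical in
/-- Histories of the play where the opponent spoils `σ` inside the region `R`. -/
noncomputable def spoilHist (A : GameArena P) (pl : Player) (R : P → Prop) (σ : List P → P)
    (v : P) : ℕ → List P
  | 0 => [v]
  | n + 1 =>
    let w := spoilHist A pl R σ v n
    if A.DeadEnd (w.getLastD v) then w else w ++ [spoilStep A pl R σ v w]

/-- **Spoiler lemma.**  If there is a region `R` containing `v`, avoiding dead
ends won by `pl`, closed under all moves at `pl`'s positions and containing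
some move at each of the opponent's non-dead-end positions, then `pl` has no
winning strategy from `v`. -/
theorem GameArena.not_hasWinningStrategy_of_region (A : GameArena P) (pl : Player) (v : P)
    (R : P → Prop) (h0 : R v)
    (hdead : ∀ p, R p → A.DeadEnd p → ¬ A.win p pl)
    (hpl : ∀ p, R p → A.turn p = pl → ∀ q, A.edge p q → R q)
    (hopp : ∀ p, R p → A.turn p ≠ pl → ¬ A.DeadEnd p → ∃ q, A.edge p q ∧ R q) :
    ¬ A.HasWinningStrategy pl v := by
  rintro ⟨σ, hleg, hfin, hinf⟩
  classical
  set h : ℕ → List P := spoilHist A pl R σ v with hdef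
  have hsucc : ∀ n, h (n+1) = if A.DeadEnd ((h n).getLastD v) then h n
      else h n ++ [spoilStep A pl R σ v (h n)] := fun n => rfl
  have key : ∀ n, A.IsWalkFrom v (h n) ∧ A.FollowsFin pl σ (h n) ∧ (∀ p ∈ h n, R p) := by
    intro n
    induction n with
    | zero =>
      have h00 : h 0 = [v] := rfl
      rw [h00]
      refine ⟨GameArena.isWalkFrom_singleton v, GameArena.followsFin_singleton v, ?_⟩
      intro p hp
      rw [List.mem_singleton] at hp
      rwa [hp]
    | succ n ih =>
      obtain ⟨hw, hf, hR⟩ := ih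
      rw [hsucc]
      by_cases hd : A.DeadEnd ((h n).getLastD v)
      · rw [if_pos hd]; exact ⟨hw, hf, hR⟩
      · rw [if_neg hd]
        obtain ⟨u, hu⟩ := hw.getLast?_eq_some
        have hud : (h n).getLastD v = u := by
          rw [List.getLastD_eq_getLast?, hu]; rfl
        have hRu : R u := hR u (mem_of_getLast?' hu)
        have hnd : ¬ A.DeadEnd u := by rw [← hud]; exact hd
        have hstep : A.edge u (spoilStep A pl R σ v (h n)) ∧ R (spoilStep A pl R σ v (h n)) := by
          unfold spoilStep
          rw [hud]
          by_cases ht : A.turn u = pl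
          · rw [if_pos ht]
            have hex : ∃ x, A.edge u x := by
              by_contra hc
              push_neg at hc
              exact hnd hc
            have hedge := hleg (h n) u hw hu ht hex
            exact ⟨hedge, hpl u hRu ht _ hedge⟩
          · rw [if_neg ht]
            obtain hex := hopp u hRu ht hnd
            rw [dif_pos hex]
            exact ⟨hex.choose_spec.1, hex.choose_spec.2⟩
        refine ⟨hw.snoc hu hstep.1, GameArena.followsFin_snoc hf ?_, ?_⟩
        · intro u' hu' ht'
          rw [hu] at hu'
          cases hu'
          show spoilStep A pl R σ v (h n) = σ (h n)
          unfold spoilStep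
          rw [hud, if_pos ht']
        · intro p hp
          rcases List.mem_append.mp hp with hp | hp
          · exact hR p hp
          · rw [List.mem_singleton] at hp
            rw [hp]
            exact hstep.2
  by_cases hstop : ∃ n, A.DeadEnd ((h n).getLastD v)
  · obtain ⟨n, hd⟩ := hstop
    obtain ⟨hw, hf, hR⟩ := key n
    obtain ⟨u, hu⟩ := hw.getLast?_eq_some
    have hud : (h n).getLastD v = u := by rw [List.getLastD_eq_getLast?, hu]; rfl
    rw [hud] at hd
    have hplay : A.IsFinitePlay v (h n) :=
      ⟨hw, fun u' hu' => by rw [hu] at hu'; cases hu'; exact hd⟩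
    obtain ⟨u', hu', hwin⟩ := hfin (h n) hplay hf
    rw [hu] at hu'
    cases hu'
    exact hdead u (hR u (mem_of_getLast?' hu)) hd hwin
  · push_neg at hstop
    set f : ℕ → P := fun n => (h n).getLastD v with hfdef
    have hstepval : ∀ n, f (n+1) = spoilStep A pl R σ v (h n) := by
      intro n
      show (h (n+1)).getLastD v = _
      rw [hsucc, if_neg (hstop n), List.getLastD_concat]
    have hgrow : ∀ n, h (n+1) = h n ++ [f (n+1)] := by
      intro n
      rw [hsucc, if_neg (hstop n), hstepval]
    have hlast : ∀ n, (h n).getLast? = some (f n) := by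
      intro n
      obtain ⟨u, hu⟩ := (key n).1.getLast?_eq_some
      rw [hu]
      congr 1
      show _ = (h n).getLastD v
      rw [List.getLastD_eq_getLast?, hu]
      rfl
    have hofn : ∀ n, h n = List.ofFn (fun i : Fin (n+1) => f i) := by
      intro n
      induction n with
      | zero =>
        show h 0 = [f 0]
        have : f 0 = v := rfl
        rw [this]
        rfl
      | succ n ih =>
        rw [hgrow n, ih, ofFn_snoc f n]
    have hedge : ∀ n, A.edge (f n) (f (n+1)) := by
      intro n
      have hw := (key (n+1)).1
      rw [hgrow n] at hw
      obtain ⟨_, u, hu, he⟩ := hw.of_snoc ((key n).1.ne_nil)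
      rw [hlast n] at hu
      cases hu
      exact he
    have hinfplay : A.IsInfPlay v f := ⟨rfl, hedge⟩
    refine hinf f hinfplay ?_
    intro n ht
    rw [hstepval n]
    unfold spoilStep
    have hud : (h n).getLastD v = f n := rfl
    rw [hud, if_pos ht, ← hofn n]

end Spoiler

section Winner

variable {P : Type u} {α : Type}

open Classical in
/-- The next move of the region-based winning strategy. -/
noncomputable def winStep (A : GameArena P) (W : P → Prop) (ρ : P → α) (r : α → α → Prop)
    (v : P) (w : List P) : P :=
  if h1 : ∃ q, A.edge (w.getLastD v) q ∧ W q ∧ r (ρ q) (ρ (w.getLastD v)) then h1.choose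
  else if h2 : ∃ q, A.edge (w.getLastD v) q then h2.choose
  else v

/-- **Winning-region lemma.**  A region containing `v`, consisting of
positions that are winning in a ranked way for `pl`, yields a winning
strategy for `pl` from `v`. -/
theorem GameArena.hasWinningStrategy_of_region (A : GameArena P) (pl : Player) (v : P)
    (W : P → Prop) (ρ : P → α) (r : α → α → Prop) (hwf : WellFounded r)
    (h0 : W v)
    (hdead : ∀ p, W p → A.DeadEnd p → A.win p pl)
    (hpl : ∀ p, W p → A.turn p = pl → ¬ A.DeadEnd p →
      ∃ q, A.edge p q ∧ W q ∧ r (ρ q) (ρ p))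
    (hopp : ∀ p, W p → A.turn p ≠ pl → ∀ q, A.edge p q → W q ∧ r (ρ q) (ρ p)) :
    A.HasWinningStrategy pl v := by
  classical
  set σ : List P → P := winStep A W ρ r v with hσ
  have hσval : ∀ (w : List P) (u : P), w.getLastD v = u →
      (∀ h1 : ∃ q, A.edge u q ∧ W q ∧ r (ρ q) (ρ u), σ w = h1.choose) ∧
      ((¬ ∃ q, A.edge u q ∧ W q ∧ r (ρ q) (ρ u)) →
        ∀ h2 : ∃ q, A.edge u q, σ w = h2.choose) := by
    intro w u hu
    subst hu
    constructor
    · intro h1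
      show winStep A W ρ r v w = _
      unfold winStep
      rw [dif_pos h1]
    · intro hn h2
      show winStep A W ρ r v w = _
      unfold winStep
      rw [dif_neg hn, dif_pos h2]
  -- Main invariant: any walk following σ stays in W.
  have hmem : ∀ w, A.IsWalkFrom v w → A.FollowsFin pl σ w → ∀ p ∈ w, W p := by
    intro w
    induction w using List.reverseRecOn with
    | nil => intro hw; exact absurd rfl hw.ne_nil
    | append_singleton w x ihw =>
      intro hw hf p hp
      by_cases hwnil : w = []
      · subst hwnil
        have hx : x = v := by
          have := hw.1
          simp only [List.nil_append, List.head?_cons] at this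
          exact Option.some.inj this
        rw [List.nil_append, List.mem_singleton] at hp
        rw [hp, hx]
        exact h0
      · obtain ⟨hw', u, hu, he⟩ := hw.of_snoc hwnil
        have hf' : A.FollowsFin pl σ w := hf.of_prefix ⟨[x], rfl⟩
        have hWw := ihw hw' hf'
        rcases List.mem_append.mp hp with hp | hp
        · exact hWw p hp
        · rw [List.mem_singleton] at hp
          subst hp
          have hWu : W u := hWw u (mem_of_getLast?' hu)
          have hud : w.getLastD v = u := by rw [List.getLastD_eq_getLast?, hu]; rfl
          by_cases ht : A.turn u = pl
          · have hxσ : p = σ w := hf.last_eq hu ht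
            have hnd : ¬ A.DeadEnd u := fun hc => hc p he
            obtain h1 := hpl u hWu ht hnd
            rw [(hσval w u hud).1 h1] at hxσ
            rw [hxσ]
            exact h1.choose_spec.2.1
          · exact (hopp u hWu ht p he).1
  refine ⟨σ, ?_, ?_, ?_⟩
  · -- legality
    intro w u hw hu ht hex
    have hud : w.getLastD v = u := by rw [List.getLastD_eq_getLast?, hu]; rfl
    by_cases h1 : ∃ q, A.edge u q ∧ W q ∧ r (ρ q) (ρ u)
    · rw [(hσval w u hud).1 h1]
      exact h1.choose_spec.1
    · rw [(hσval w u hud).2 h1 hex]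
      exact hex.choose_spec
  · -- finite plays
    intro w hplay hfol
    obtain ⟨u, hu⟩ := hplay.1.getLast?_eq_some
    refine ⟨u, hu, ?_⟩
    exact hdead u (hmem w hplay.1 hfol u (mem_of_getLast?' hu)) (hplay.2 u hu)
  · -- no infinite plays
    intro f hplay hfol
    obtain ⟨hf0, hfe⟩ := hplay
    have hlastofn : ∀ n, (List.ofFn fun i : Fin (n+1) => f i).getLast? = some (f n) := by
      intro n
      cases n with
      | zero => rfl
      | succ n => rw [ofFn_snoc f n, List.getLast?_concat]
    have hwalk : ∀ n, A.IsWalkFrom v (List.ofFn fun i : Fin (n+1) => f i) := by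
      intro n
      induction n with
      | zero =>
        show A.IsWalkFrom v [f 0]
        rw [hf0]
        exact GameArena.isWalkFrom_singleton v
      | succ n ih =>
        rw [ofFn_snoc f n]
        exact ih.snoc (hlastofn n) (hfe n)
    have hfollows : ∀ n, A.FollowsFin pl σ (List.ofFn fun i : Fin (n+1) => f i) := by
      intro n
      induction n with
      | zero => exact GameArena.followsFin_singleton _
      | succ n ih =>
        rw [ofFn_snoc f n]
        refine GameArena.followsFin_snoc ih ?_
        intro u hu ht
        rw [hlastofn n] at hu
        cases hu
        exact hfol n ht
    have hW : ∀ n, W (f n) := by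
      intro n
      have := hmem _ (hwalk n) (hfollows n) (f n)
      apply this
      rw [List.mem_ofFn]
      exact ⟨Fin.last n, rfl⟩
    have hr : ∀ n, r (ρ (f (n+1))) (ρ (f n)) := by
      intro n
      by_cases ht : A.turn (f n) = pl
      · have hfn1 : f (n+1) = σ (List.ofFn fun i : Fin (n+1) => f i) := hfol n ht
        have hud : (List.ofFn fun i : Fin (n+1) => f i).getLastD v = f n := by
          rw [List.getLastD_eq_getLast?, hlastofn n]
          rfl
        have hnd : ¬ A.DeadEnd (f n) := fun hc => hc _ (hfe n)
        obtain h1 := hpl (f n) (hW n) ht hnd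
        rw [(hσval _ _ hud).1 h1] at hfn1
        rw [hfn1]
        exact h1.choose_spec.2.2
      · exact (hopp (f n) (hW n) ht _ (hfe n)).2
    have : ∀ a, ∀ n, ρ (f n) = a → False := by
      intro a
      induction a using hwf.induction with
      | _ a ih =>
        intro n hn
        exact ih (ρ (f (n+1))) (hn ▸ hr n) (n+1) rfl
    exact this (ρ (f 0)) 0 rfl

end Winner


/-! ## Sizes and subformulas -/

section Sub

open SCLFormula

variable {V : Vocab}

def fsize : SCLFormula V → ℕ
  | .bot => 1
  | .eq _ _ => 1
  | .rel _ _ => 1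
  | .claim _ => 1
  | .not φ => fsize φ + 1
  | .and φ ψ => fsize φ + fsize ψ + 1
  | .or φ ψ => fsize φ + fsize ψ + 1
  | .ex _ φ => fsize φ + 1
  | .all _ φ => fsize φ + 1
  | .lab _ φ => fsize φ + 1

def subs : SCLFormula V → List (SCLFormula V)
  | .bot => [.bot]
  | .eq x y => [.eq x y]
  | .rel R a => [.rel R a]
  | .claim L => [.claim L]
  | .not φ => .not φ :: subs φ
  | .and φ ψ => .and φ ψ :: (subs φ ++ subs ψ)
  | .or φ ψ => .or φ ψ :: (subs φ ++ subs ψ)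
  | .ex x φ => .ex x φ :: subs φ
  | .all x φ => .all x φ :: subs φ
  | .lab L φ => .lab L φ :: subs φ

lemma mem_subs_self (φ : SCLFormula V) : φ ∈ subs φ := by
  cases φ <;> simp [subs]

lemma subs_trans : ∀ (φ ψ χ : SCLFormula V), χ ∈ subs ψ → ψ ∈ subs φ → χ ∈ subs φ := by
  intro φ
  induction φ with
  | bot => intro ψ χ h1 h2; simp [subs] at h2; subst h2; simpa [subs] using h1
  | eq x y => intro ψ χ h1 h2; simp [subs] at h2; subst h2; simpa [subs] using h1
  | rel R a => intro ψ χ h1 h2; simp [subs] at h2; subst h2; simpa [subs] using h1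
  | claim L => intro ψ χ h1 h2; simp [subs] at h2; subst h2; simpa [subs] using h1
  | not φ ih =>
    intro ψ χ h1 h2
    rcases List.mem_cons.mp h2 with h2 | h2
    · subst h2; exact h1
    · exact List.mem_cons_of_mem _ (ih ψ χ h1 h2)
  | and φ φ' ih ih' =>
    intro ψ χ h1 h2
    rcases List.mem_cons.mp h2 with h2 | h2
    · subst h2; exact h1
    · rcases List.mem_append.mp h2 with h2 | h2
      · exact List.mem_cons_of_mem _ (List.mem_append.mpr (Or.inl (ih ψ χ h1 h2)))
      · exact List.mem_cons_of_mem _ (List.mem_append.mpr (Or.inr (ih' ψ χ h1 h2)))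
  | or φ φ' ih ih' =>
    intro ψ χ h1 h2
    rcases List.mem_cons.mp h2 with h2 | h2
    · subst h2; exact h1
    · rcases List.mem_append.mp h2 with h2 | h2
      · exact List.mem_cons_of_mem _ (List.mem_append.mpr (Or.inl (ih ψ χ h1 h2)))
      · exact List.mem_cons_of_mem _ (List.mem_append.mpr (Or.inr (ih' ψ χ h1 h2)))
  | ex x φ ih =>
    intro ψ χ h1 h2
    rcases List.mem_cons.mp h2 with h2 | h2
    · subst h2; exact h1
    · exact List.mem_cons_of_mem _ (ih ψ χ h1 h2)
  | all x φ ih =>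
    intro ψ χ h1 h2
    rcases List.mem_cons.mp h2 with h2 | h2
    · subst h2; exact h1
    · exact List.mem_cons_of_mem _ (ih ψ χ h1 h2)
  | lab L φ ih =>
    intro ψ χ h1 h2
    rcases List.mem_cons.mp h2 with h2 | h2
    · subst h2; exact h1
    · exact List.mem_cons_of_mem _ (ih ψ χ h1 h2)

lemma fsize_le_of_mem_subs : ∀ (φ ψ : SCLFormula V), ψ ∈ subs φ → fsize ψ ≤ fsize φ := by
  intro φ
  induction φ with
  | bot => intro ψ h; simp [subs] at h; subst h; exact le_refl _
  | eq x y => intro ψ h; simp [subs] at h; subst h; exact le_refl _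
  | rel R a => intro ψ h; simp [subs] at h; subst h; exact le_refl _
  | claim L => intro ψ h; simp [subs] at h; subst h; exact le_refl _
  | not φ ih =>
    intro ψ h
    rcases List.mem_cons.mp h with h | h
    · subst h; exact le_refl _
    · exact le_trans (ih ψ h) (by simp only [fsize]; omega)
  | and φ φ' ih ih' =>
    intro ψ h
    rcases List.mem_cons.mp h with h | h
    · subst h; exact le_refl _
    · rcases List.mem_append.mp h with h | h
      · exact le_trans (ih ψ h) (by simp only [fsize]; omega)
      · exact le_trans (ih' ψ h) (by simp only [fsize]; omega)
  | or φ φ' ih ih' =>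
    intro ψ h
    rcases List.mem_cons.mp h with h | h
    · subst h; exact le_refl _
    · rcases List.mem_append.mp h with h | h
      · exact le_trans (ih ψ h) (by simp only [fsize]; omega)
      · exact le_trans (ih' ψ h) (by simp only [fsize]; omega)
  | ex x φ ih =>
    intro ψ h
    rcases List.mem_cons.mp h with h | h
    · subst h; exact le_refl _
    · exact le_trans (ih ψ h) (by simp only [fsize]; omega)
  | all x φ ih =>
    intro ψ h
    rcases List.mem_cons.mp h with h | h
    · subst h; exact le_refl _
    · exact le_trans (ih ψ h) (by simp only [fsize]; omega)
  | lab L φ ih =>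
    intro ψ h
    rcases List.mem_cons.mp h with h | h
    · subst h; exact le_refl _
    · exact le_trans (ih ψ h) (by simp only [fsize]; omega)

lemma rank_arith₁ {kq kp sq sp C : ℕ} (h1 : kq ≤ kp) (h2 : sq < sp) :
    kq * C + sq < kp * C + sp :=
  Nat.add_lt_add_of_le_of_lt (Nat.mul_le_mul_right _ h1) h2

lemma rank_arith₂ {kq kp sq sp C : ℕ} (h1 : kq < kp) (h2 : sq < C) :
    kq * C + sq < kp * C + sp := by
  have : kq * C + sq < (kq + 1) * C := by
    have : (kq + 1) * C = kq * C + C := by ring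
    omega
  have h3 : (kq + 1) * C ≤ kp * C := Nat.mul_le_mul_right _ h1
  omega

end Sub

/-! ## Saturation -/

section Sat

variable {V : Vocab}

/-- The amount of `ℵ₀`-saturation needed: every countable decreasing
definable family which is satisfiable levelwise is uniformly satisfiable. -/
def SatStruct (M : Struct.{u} V) : Prop :=
  ∀ (θ : ℕ → SCLFormula V) (s : ℕ → M.Dom) (x : ℕ),
    (∀ n, (θ n).IsFO) →
    (∀ (n : ℕ) (N : Struct.{u} V) (s' : ℕ → N.Dom), FOSat N s' (θ (n+1)) → FOSat N s' (θ n)) →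
    (∀ n, ∃ a, FOSat M (Function.update s x a) (θ n)) →
    ∃ a, ∀ n, FOSat M (Function.update s x a) (θ n)

variable {M : Struct.{u} V}

lemma EG_true_iff (n : ℕ) (e) (s : ℕ → M.Dom) (ψ : SCLFormula V) :
    EG M n e s true ψ ↔ FOSat M s (APX (dE V) n e true ψ) := by simp [EG]
lemma EG_false_iff (n : ℕ) (e) (s : ℕ → M.Dom) (ψ : SCLFormula V) :
    EG M n e s false ψ ↔ ¬ FOSat M s (APX (dE V) n e false ψ) := by simp [EG]
lemma AG_true_iff (n : ℕ) (e) (s : ℕ → M.Dom) (ψ : SCLFormula V) :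
    AG M n e s true ψ ↔ ¬ FOSat M s (APX (dA V) n e true ψ) := by simp [AG]
lemma AG_false_iff (n : ℕ) (e) (s : ℕ → M.Dom) (ψ : SCLFormula V) :
    AG M n e s false ψ ↔ FOSat M s (APX (dA V) n e false ψ) := by simp [AG]

end Sat

/-! ## Region instantiations for the unbounded game -/

section GameU

open SCLFormula

variable {V : Vocab} {M : Struct.{u} V}

lemma gameU_edge {p q : SCLPos V M.Dom} (h : (gameU M).edge p q) : UStep M p q := h

/-- If Abelard's value is achieved at some level, Eloise has no winning
strategy in the unbounded game. -/
theorem not_eloiseU_of_AG (φ : SCLFormula V) (s : ℕ → M.Dom) (k : ℕ)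
    (h : AG M k (fun _ => none) s true φ) :
    ¬ (gameU M).HasWinningStrategy .eloise (initPos φ s) := by
  apply (gameU M).not_hasWinningStrategy_of_region .eloise _
    (fun p => ∃ m, AG M m p.env p.asg p.pol p.form)
  · exact ⟨k, h⟩
  · -- dead ends
    rintro ⟨ψ, e, s', b⟩ ⟨m, hm⟩ hd ⟨hatom, hiff⟩
    cases ψ with
    | bot =>
      rw [AG_bot] at hm
      simp only [atomSat] at hiff
      cases b
      · simp at hm
      · simp at hiff
    | eq x y =>
      rw [AG_eq] at hm
      simp only [atomSat] at hiff
      cases b <;> simp_all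
    | rel R a =>
      rw [AG_rel] at hm
      simp only [atomSat] at hiff
      cases b <;> simp_all
    | claim L => exact hatom
    | not φ' => exact hatom
    | and φ' ψ' => exact hatom
    | or φ' ψ' => exact hatom
    | ex x φ' => exact hatom
    | all x φ' => exact hatom
    | lab L φ' => exact hatom
  · -- closure at Eloise's positions
    rintro p ⟨m, hm⟩ ht q hq
    have hq' : UStep M p q := hq
    cases hq' with
    | neg φ' e s' b =>
      rw [AG_not] at hm
      exact ⟨m, hm⟩
    | andLeft φ' ψ' e s' b =>
      cases b
      · rw [AG_and_f] at hm; exact ⟨m, hm.1⟩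
      · exact absurd ht (by simp [gameU, posTurn])
    | andRight φ' ψ' e s' b =>
      cases b
      · rw [AG_and_f] at hm; exact ⟨m, hm.2⟩
      · exact absurd ht (by simp [gameU, posTurn])
    | orLeft φ' ψ' e s' b =>
      cases b
      · exact absurd ht (by simp [gameU, posTurn])
      · rw [AG_or_t] at hm; exact ⟨m, hm.1⟩
    | orRight φ' ψ' e s' b =>
      cases b
      · exact absurd ht (by simp [gameU, posTurn])
      · rw [AG_or_t] at hm; exact ⟨m, hm.2⟩
    | exStep x φ' e s' b a =>
      cases b
      · exact absurd ht (by simp [gameU, posTurn])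
      · rw [AG_ex_t] at hm; exact ⟨m, hm a⟩
    | allStep x φ' e s' b a =>
      cases b
      · rw [AG_all_f] at hm; exact ⟨m, hm a⟩
      · exact absurd ht (by simp [gameU, posTurn])
    | labStep L φ' e s' b =>
      rw [AG_lab] at hm
      exact ⟨m, hm⟩
    | claimStep L e s' b χ hL =>
      cases m with
      | zero => exact absurd hm (AG_claim_zero e s' b L)
      | succ m =>
        rw [AG_claim_succ _ _ _ _ _ _ hL] at hm
        exact ⟨m, hm⟩
  · -- moves at Abelard's positions
    rintro ⟨ψ, e, s', b⟩ ⟨m, hm⟩ ht hnd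
    cases ψ with
    | bot => exact (ht rfl).elim
    | eq x y => exact (ht rfl).elim
    | rel R a => exact (ht rfl).elim
    | claim L => exact (ht rfl).elim
    | not φ' => exact (ht rfl).elim
    | lab L φ' => exact (ht rfl).elim
    | and φ' ψ' =>
      cases b
      · exact (ht rfl).elim
      · rw [AG_and_t] at hm
        rcases hm with hm | hm
        · exact ⟨⟨φ', e, s', true⟩, UStep.andLeft .., ⟨m, hm⟩⟩
        · exact ⟨⟨ψ', e, s', true⟩, UStep.andRight .., ⟨m, hm⟩⟩
    | or φ' ψ' =>
      cases b
      · rw [AG_or_f] at hm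
        rcases hm with hm | hm
        · exact ⟨⟨φ', e, s', false⟩, UStep.orLeft .., ⟨m, hm⟩⟩
        · exact ⟨⟨ψ', e, s', false⟩, UStep.orRight .., ⟨m, hm⟩⟩
      · exact (ht rfl).elim
    | ex x φ' =>
      cases b
      · rw [AG_ex_f] at hm
        rcases hm with ⟨a, hm⟩
        exact ⟨⟨φ', e, Function.update s' x a, false⟩, UStep.exStep .., ⟨m, hm⟩⟩
      · exact (ht rfl).elim
    | all x φ' =>
      cases b
      · exact (ht rfl).elim
      · rw [AG_all_t] at hm
        rcases hm with ⟨a, hm⟩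
        exact ⟨⟨φ', e, Function.update s' x a, true⟩, UStep.allStep .., ⟨m, hm⟩⟩

lemma FOSat_dE_mono_t (N : Struct.{u} V) (n : ℕ) (e) (s' : ℕ → N.Dom) (ψ : SCLFormula V)
    (h : FOSat N s' (APX (dE V) n e true ψ)) : FOSat N s' (APX (dE V) (n+1) e true ψ) :=
  (EG_true_iff _ _ _ _).mp (EG_mono n ψ e s' true ((EG_true_iff _ _ _ _).mpr h))

lemma FOSat_dE_mono_f (N : Struct.{u} V) (n : ℕ) (e) (s' : ℕ → N.Dom) (ψ : SCLFormula V)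
    (h : FOSat N s' (APX (dE V) (n+1) e false ψ)) : FOSat N s' (APX (dE V) n e false ψ) := by
  by_contra hc
  exact (EG_false_iff _ _ _ _).mp (EG_mono n ψ e s' false ((EG_false_iff _ _ _ _).mpr hc)) h

lemma FOSat_dA_mono_t (N : Struct.{u} V) (n : ℕ) (e) (s' : ℕ → N.Dom) (ψ : SCLFormula V)
    (h : FOSat N s' (APX (dA V) (n+1) e true ψ)) : FOSat N s' (APX (dA V) n e true ψ) := by
  by_contra hc
  exact (AG_true_iff _ _ _ _).mp (AG_mono n ψ e s' true ((AG_true_iff _ _ _ _).mpr hc)) h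

lemma FOSat_dA_mono_f (N : Struct.{u} V) (n : ℕ) (e) (s' : ℕ → N.Dom) (ψ : SCLFormula V)
    (h : FOSat N s' (APX (dA V) n e false ψ)) : FOSat N s' (APX (dA V) (n+1) e false ψ) :=
  (AG_false_iff _ _ _ _).mp (AG_mono n ψ e s' false ((AG_false_iff _ _ _ _).mpr h))

/-- In a saturated structure, if Eloise's value fails at every level then she
has no winning strategy in the unbounded game. -/
theorem not_eloiseU_of_not_EG (hsat : SatStruct M) (φ : SCLFormula V) (s : ℕ → M.Dom)
    (h : ∀ n, ¬ EG M n (fun _ => none) s true φ) :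
    ¬ (gameU M).HasWinningStrategy .eloise (initPos φ s) := by
  apply (gameU M).not_hasWinningStrategy_of_region .eloise _
    (fun p => ∀ n, ¬ EG M n p.env p.asg p.pol p.form)
  · exact h
  · rintro ⟨ψ, e, s', b⟩ hR hd ⟨hatom, hiff⟩
    simp only at hR hiff hatom
    cases ψ with
    | bot =>
      cases b
      · exact hR 0 ((EG_bot _ _ _ _).mpr rfl)
      · simp only [atomSat] at hiff
        simp at hiff
    | eq x y => exact hR 0 (by rw [EG_eq]; simpa [atomSat] using hiff)
    | rel R a => exact hR 0 (by rw [EG_rel]; simpa [atomSat] using hiff)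
    | claim L => exact hatom
    | not φ' => exact hatom
    | and φ' ψ' => exact hatom
    | or φ' ψ' => exact hatom
    | ex x φ' => exact hatom
    | all x φ' => exact hatom
    | lab L φ' => exact hatom
  · rintro p hR ht q hq
    have hq' : UStep M p q := hq
    cases hq' with
    | neg φ' e s' b => exact fun n h' => hR n (by rw [EG_not]; exact h')
    | andLeft φ' ψ' e s' b =>
      cases b
      · exact fun n h' => hR n (by rw [EG_and_f]; exact Or.inl h')
      · exact absurd ht (by simp [gameU, posTurn])
    | andRight φ' ψ' e s' b =>
      cases b
      · exact fun n h' => hR n (by rw [EG_and_f]; exact Or.inr h')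
      · exact absurd ht (by simp [gameU, posTurn])
    | orLeft φ' ψ' e s' b =>
      cases b
      · exact absurd ht (by simp [gameU, posTurn])
      · exact fun n h' => hR n (by rw [EG_or_t]; exact Or.inl h')
    | orRight φ' ψ' e s' b =>
      cases b
      · exact absurd ht (by simp [gameU, posTurn])
      · exact fun n h' => hR n (by rw [EG_or_t]; exact Or.inr h')
    | exStep x φ' e s' b a =>
      cases b
      · exact absurd ht (by simp [gameU, posTurn])
      · exact fun n h' => hR n (by rw [EG_ex_t]; exact ⟨a, h'⟩)
    | allStep x φ' e s' b a =>
      cases b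
      · exact fun n h' => hR n (by rw [EG_all_f]; exact ⟨a, h'⟩)
      · exact absurd ht (by simp [gameU, posTurn])
    | labStep L φ' e s' b => exact fun n h' => hR n (by rw [EG_lab]; exact h')
    | claimStep L e s' b χ hL =>
      exact fun n h' => hR (n+1) (by rw [EG_claim_succ _ _ _ _ _ _ hL]; exact h')
  · rintro ⟨ψ, e, s', b⟩ hR ht hnd
    simp only at hR
    cases ψ with
    | bot => exact (ht rfl).elim
    | eq x y => exact (ht rfl).elim
    | rel R a => exact (ht rfl).elim
    | claim L => exact (ht rfl).elim
    | not φ' => exact (ht rfl).elim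
    | lab L φ' => exact (ht rfl).elim
    | and φ' ψ' =>
      cases b
      · exact (ht rfl).elim
      · by_cases hc : ∀ n, ¬ EG M n e s' true φ'
        · exact ⟨⟨φ', e, s', true⟩, UStep.andLeft .., hc⟩
        · push_neg at hc
          obtain ⟨n₁, h1⟩ := hc
          refine ⟨⟨ψ', e, s', true⟩, UStep.andRight .., ?_⟩
          intro n h2
          exact hR (max n₁ n) (by
            rw [EG_and_t]
            exact ⟨EG_mono_le (le_max_left _ _) h1, EG_mono_le (le_max_right _ _) h2⟩)
    | or φ' ψ' =>
      cases b
      · by_cases hc : ∀ n, ¬ EG M n e s' false φ'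
        · exact ⟨⟨φ', e, s', false⟩, UStep.orLeft .., hc⟩
        · push_neg at hc
          obtain ⟨n₁, h1⟩ := hc
          refine ⟨⟨ψ', e, s', false⟩, UStep.orRight .., ?_⟩
          intro n h2
          exact hR (max n₁ n) (by
            rw [EG_or_f]
            exact ⟨EG_mono_le (le_max_left _ _) h1, EG_mono_le (le_max_right _ _) h2⟩)
      · exact (ht rfl).elim
    | ex x φ' =>
      cases b
      · obtain ⟨a, ha⟩ := hsat (fun n => APX (dE V) n e false φ') s' x
          (fun n => APX_isFO _ dE_isFO n _ _ _)
          (fun n N sN hf => FOSat_dE_mono_f N n e sN φ' hf)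
          (by
            intro n
            have := hR n
            rw [EG_ex_f] at this
            push_neg at this
            obtain ⟨a, ha⟩ := this
            rw [EG_false_iff, not_not] at ha
            exact ⟨a, ha⟩)
        refine ⟨⟨φ', e, Function.update s' x a, false⟩, UStep.exStep .., ?_⟩
        intro n h'
        rw [EG_false_iff] at h'
        exact h' (ha n)
      · exact (ht rfl).elim
    | all x φ' =>
      cases b
      · exact (ht rfl).elim
      · obtain ⟨a, ha⟩ := hsat (fun n => .not (APX (dE V) n e true φ')) s' x
          (fun n => APX_isFO _ dE_isFO n _ _ _)
          (by
            intro n N sN hf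
            show ¬ _
            intro hx
            exact hf (FOSat_dE_mono_t N n e sN φ' hx))
          (by
            intro n
            have := hR n
            rw [EG_all_t] at this
            push_neg at this
            obtain ⟨a, ha⟩ := this
            refine ⟨a, ?_⟩
            show ¬ _
            intro hx
            exact ha ((EG_true_iff _ _ _ _).mpr hx))
        refine ⟨⟨φ', e, Function.update s' x a, true⟩, UStep.allStep .., ?_⟩
        intro n h'
        exact ha n ((EG_true_iff _ _ _ _).mp h')

/-- In a saturated structure, if Abelard's value fails at every level then he
has no winning strategy in the unbounded game. -/
theorem not_abelardU_of_not_AG (hsat : SatStruct M) (φ : SCLFormula V) (s : ℕ → M.Dom)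
    (h : ∀ n, ¬ AG M n (fun _ => none) s true φ) :
    ¬ (gameU M).HasWinningStrategy .abelard (initPos φ s) := by
  apply (gameU M).not_hasWinningStrategy_of_region .abelard _
    (fun p => ∀ n, ¬ AG M n p.env p.asg p.pol p.form)
  · exact h
  · rintro ⟨ψ, e, s', b⟩ hR hd ⟨hatom, hiff⟩
    simp only at hR hiff hatom
    cases ψ with
    | bot =>
      cases b
      · simp only [atomSat] at hiff
        simp at hiff
      · exact hR 0 ((AG_bot _ _ _ _).mpr rfl)
    | eq x y =>
      simp only [atomSat] at hiff
      refine hR 0 ((AG_eq _ _ _ _ _ _).mpr ?_)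
      cases b <;> simp at hiff <;> simpa using hiff
    | rel R a =>
      simp only [atomSat] at hiff
      refine hR 0 ((AG_rel _ _ _ _ _ _).mpr ?_)
      cases b <;> simp at hiff <;> simpa using hiff
    | claim L => exact hatom
    | not φ' => exact hatom
    | and φ' ψ' => exact hatom
    | or φ' ψ' => exact hatom
    | ex x φ' => exact hatom
    | all x φ' => exact hatom
    | lab L φ' => exact hatom
  · rintro p hR ht q hq
    have hq' : UStep M p q := hq
    cases hq' with
    | neg φ' e s' b => exact absurd ht (by simp [gameU, posTurn])
    | andLeft φ' ψ' e s' b =>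
      cases b
      · exact absurd ht (by simp [gameU, posTurn])
      · exact fun n h' => hR n (by rw [AG_and_t]; exact Or.inl h')
    | andRight φ' ψ' e s' b =>
      cases b
      · exact absurd ht (by simp [gameU, posTurn])
      · exact fun n h' => hR n (by rw [AG_and_t]; exact Or.inr h')
    | orLeft φ' ψ' e s' b =>
      cases b
      · exact fun n h' => hR n (by rw [AG_or_f]; exact Or.inl h')
      · exact absurd ht (by simp [gameU, posTurn])
    | orRight φ' ψ' e s' b =>
      cases b
      · exact fun n h' => hR n (by rw [AG_or_f]; exact Or.inr h')
      · exact absurd ht (by simp [gameU, posTurn])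
    | exStep x φ' e s' b a =>
      cases b
      · exact fun n h' => hR n (by rw [AG_ex_f]; exact ⟨a, h'⟩)
      · exact absurd ht (by simp [gameU, posTurn])
    | allStep x φ' e s' b a =>
      cases b
      · exact absurd ht (by simp [gameU, posTurn])
      · exact fun n h' => hR n (by rw [AG_all_t]; exact ⟨a, h'⟩)
    | labStep L φ' e s' b => exact absurd ht (by simp [gameU, posTurn])
    | claimStep L e s' b χ hL => exact absurd ht (by simp [gameU, posTurn])
  · rintro ⟨ψ, e, s', b⟩ hR ht hnd
    simp only at hR
    cases ψ with
    | bot => exact absurd (fun q hq => by cases hq) hnd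
    | eq x y => exact absurd (fun q hq => by cases hq) hnd
    | rel R a => exact absurd (fun q hq => by cases hq) hnd
    | claim L =>
      rw [GameArena.DeadEnd] at hnd
      push_neg at hnd
      obtain ⟨q, hq⟩ := hnd
      have hq' : UStep M _ q := hq
      cases hq' with
      | claimStep L e s' b χ hL =>
        refine ⟨⟨χ, e, s', b⟩, UStep.claimStep _ _ _ _ _ hL, ?_⟩
        exact fun n h' => hR (n+1) (by rw [AG_claim_succ _ _ _ _ _ _ hL]; exact h')
    | not φ' =>
      exact ⟨⟨φ', e, s', !b⟩, UStep.neg .., fun n h' => hR n (by rw [AG_not]; exact h')⟩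
    | lab L φ' =>
      exact ⟨⟨φ', Function.update e L (some (.lab L φ')), s', b⟩, UStep.labStep ..,
        fun n h' => hR n (by rw [AG_lab]; exact h')⟩
    | and φ' ψ' =>
      cases b
      · by_cases hc : ∀ n, ¬ AG M n e s' false φ'
        · exact ⟨⟨φ', e, s', false⟩, UStep.andLeft .., hc⟩
        · push_neg at hc
          obtain ⟨n₁, h1⟩ := hc
          refine ⟨⟨ψ', e, s', false⟩, UStep.andRight .., ?_⟩
          intro n h2
          exact hR (max n₁ n) (by
            rw [AG_and_f]
            exact ⟨AG_mono_le (le_max_left _ _) h1, AG_mono_le (le_max_right _ _) h2⟩)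
      · exact (ht rfl).elim
    | or φ' ψ' =>
      cases b
      · exact (ht rfl).elim
      · by_cases hc : ∀ n, ¬ AG M n e s' true φ'
        · exact ⟨⟨φ', e, s', true⟩, UStep.orLeft .., hc⟩
        · push_neg at hc
          obtain ⟨n₁, h1⟩ := hc
          refine ⟨⟨ψ', e, s', true⟩, UStep.orRight .., ?_⟩
          intro n h2
          exact hR (max n₁ n) (by
            rw [AG_or_t]
            exact ⟨AG_mono_le (le_max_left _ _) h1, AG_mono_le (le_max_right _ _) h2⟩)
    | ex x φ' =>
      cases b
      · exact (ht rfl).elim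
      · obtain ⟨a, ha⟩ := hsat (fun n => APX (dA V) n e true φ') s' x
          (fun n => APX_isFO _ dA_isFO n _ _ _)
          (fun n N sN hf => FOSat_dA_mono_t N n e sN φ' hf)
          (by
            intro n
            have := hR n
            rw [AG_ex_t] at this
            push_neg at this
            obtain ⟨a, ha⟩ := this
            rw [AG_true_iff, not_not] at ha
            exact ⟨a, ha⟩)
        refine ⟨⟨φ', e, Function.update s' x a, true⟩, UStep.exStep .., ?_⟩
        intro n h'
        rw [AG_true_iff] at h'
        exact h' (ha n)
    | all x φ' =>
      cases b
      · obtain ⟨a, ha⟩ := hsat (fun n => .not (APX (dA V) n e false φ')) s' x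
          (fun n => APX_isFO _ dA_isFO n _ _ _)
          (by
            intro n N sN hf
            show ¬ _
            intro hx
            exact hf (FOSat_dA_mono_f N n e sN φ' hx))
          (by
            intro n
            have := hR n
            rw [AG_all_f] at this
            push_neg at this
            obtain ⟨a, ha⟩ := this
            refine ⟨a, ?_⟩
            show ¬ _
            intro hx
            exact ha ((AG_false_iff _ _ _ _).mpr hx))
        refine ⟨⟨φ', e, Function.update s' x a, false⟩, UStep.allStep .., ?_⟩
        intro n h'
        exact ha n ((AG_false_iff _ _ _ _).mp h')
      · exact (ht rfl).elim

open Classical in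
lemma rankE_lt₁ (φ0 : SCLFormula V) {p q : SCLPos V M.Dom}
    (hp : ∃ m, EG M m p.env p.asg p.pol p.form) (hq : ∃ m, EG M m q.env q.asg q.pol q.form)
    (hle : Nat.find hq ≤ Nat.find hp) (hsz : fsize q.form < fsize p.form) :
    (if hm : ∃ m, EG M m q.env q.asg q.pol q.form then Nat.find hm else 0) * (fsize φ0 + 1)
        + fsize q.form
      < (if hm : ∃ m, EG M m p.env p.asg p.pol p.form then Nat.find hm else 0) * (fsize φ0 + 1)
        + fsize p.form := by
  rw [dif_pos hq, dif_pos hp]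
  exact rank_arith₁ hle hsz

open Classical in
/-- If Eloise's value holds at some level, she wins the unbounded game. -/
theorem eloiseU_of_EG (φ : SCLFormula V) (s : ℕ → M.Dom) (k : ℕ)
    (h : EG M k (fun _ => none) s true φ) :
    (gameU M).HasWinningStrategy .eloise (initPos φ s) := by
  classical
  refine (gameU M).hasWinningStrategy_of_region .eloise _
    (fun p => (∃ m, EG M m p.env p.asg p.pol p.form) ∧ p.form ∈ subs φ ∧
      ∀ L χ, p.env L = some χ → χ ∈ subs φ)
    (fun p => (if hm : ∃ m, EG M m p.env p.asg p.pol p.form then Nat.find hm else 0)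
        * (fsize φ + 1) + fsize p.form)
    (· < ·) (Nat.lt_wfRel.wf) ⟨⟨k, h⟩, mem_subs_self φ, fun L χ hc => absurd hc (by simp [initPos])⟩
    ?_ ?_ ?_
  · -- dead ends are won
    rintro ⟨ψ, e, s', b⟩ ⟨⟨m, hm⟩, hsub, henv⟩ hd
    simp only at hm hsub henv
    cases ψ with
    | bot =>
      rw [EG_bot] at hm
      refine ⟨trivial, ?_⟩
      simp only [atomSat]
      subst hm
      simp
    | eq x y =>
      rw [EG_eq] at hm
      exact ⟨trivial, by simpa [atomSat] using hm⟩
    | rel R a =>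
      rw [EG_rel] at hm
      exact ⟨trivial, by simpa [atomSat] using hm⟩
    | claim L =>
      cases m with
      | zero => exact absurd hm (EG_claim_zero e s' b L)
      | succ m =>
        cases hL : e L with
        | none => exact absurd hm (EG_claim_none _ _ _ _ _ hL)
        | some χ => exact absurd (hd ⟨χ, e, s', b⟩ (UStep.claimStep L e s' b χ hL)) (fun h => h)
    | not φ' => exact absurd (hd ⟨φ', e, s', !b⟩ (UStep.neg ..)) (fun h => h)
    | and φ' ψ' => exact absurd (hd ⟨φ', e, s', b⟩ (UStep.andLeft ..)) (fun h => h)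
    | or φ' ψ' => exact absurd (hd ⟨φ', e, s', b⟩ (UStep.orLeft ..)) (fun h => h)
    | ex x φ' =>
      obtain ⟨a⟩ := M.dom_nonempty
      exact absurd (hd ⟨φ', e, Function.update s' x a, b⟩ (UStep.exStep ..)) (fun h => h)
    | all x φ' =>
      obtain ⟨a⟩ := M.dom_nonempty
      exact absurd (hd ⟨φ', e, Function.update s' x a, b⟩ (UStep.allStep ..)) (fun h => h)
    | lab L φ' => exact absurd (hd ⟨φ', Function.update e L (some (.lab L φ')), s', b⟩
        (UStep.labStep ..)) (fun h => h)
  · -- Eloise's moves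
    rintro ⟨ψ, e, s', b⟩ ⟨hEp, hsub, henv⟩ ht hnd
    simp only at hEp hsub henv ⊢
    have hspec := Nat.find_spec hEp
    set kp := Nat.find hEp with hkp
    cases ψ with
    | bot => exact absurd (fun q hq => by cases hq) hnd
    | eq x y => exact absurd (fun q hq => by cases hq) hnd
    | rel R a => exact absurd (fun q hq => by cases hq) hnd
    | claim L =>
      rcases hkp0 : kp with _ | kp'
      · rw [hkp0] at hspec
        exact absurd hspec (EG_claim_zero e s' b L)
      · cases hL : e L with
        | none => exact absurd hspec (EG_claim_none _ _ _ _ _ hL)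
        | some χ =>
          rw [hkp0, EG_claim_succ _ _ _ _ _ _ hL] at hspec
          have hq : ∃ m, EG M m e s' b χ := ⟨kp', hspec⟩
          refine ⟨⟨χ, e, s', b⟩, UStep.claimStep L e s' b χ hL, ⟨hq, henv L χ hL, henv⟩, ?_⟩
          rw [dif_pos hq, dif_pos hEp, ← hkp, hkp0]
          exact rank_arith₂ (Nat.lt_succ_of_le (Nat.find_min' hq hspec))
            (Nat.lt_succ_of_le (fsize_le_of_mem_subs φ χ (henv L χ hL)))
    | not φ' =>
      rw [EG_not] at hspec
      have hq : ∃ m, EG M m e s' (!b) φ' := ⟨kp, hspec⟩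
      refine ⟨⟨φ', e, s', !b⟩, UStep.neg .., ⟨hq, ?_, henv⟩, ?_⟩
      · exact subs_trans φ _ _ (List.mem_cons_of_mem _ (mem_subs_self _)) hsub
      · rw [dif_pos hq, dif_pos hEp, ← hkp]
        exact rank_arith₁ (Nat.find_min' hq hspec) (by simp only [fsize]; omega)
    | and φ' ψ' =>
      cases b
      · rw [EG_and_f] at hspec
        rcases hspec with hs | hs
        · have hq : ∃ m, EG M m e s' false φ' := ⟨kp, hs⟩
          refine ⟨⟨φ', e, s', false⟩, UStep.andLeft .., ⟨hq, ?_, henv⟩, ?_⟩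
          · exact subs_trans φ _ _ (List.mem_cons_of_mem _ (List.mem_append_left _ (mem_subs_self _))) hsub
          · rw [dif_pos hq, dif_pos hEp, ← hkp]
            exact rank_arith₁ (Nat.find_min' hq hs) (by simp only [fsize]; omega)
        · have hq : ∃ m, EG M m e s' false ψ' := ⟨kp, hs⟩
          refine ⟨⟨ψ', e, s', false⟩, UStep.andRight .., ⟨hq, ?_, henv⟩, ?_⟩
          · exact subs_trans φ _ _ (List.mem_cons_of_mem _ (List.mem_append_right _ (mem_subs_self _))) hsub
          · rw [dif_pos hq, dif_pos hEp, ← hkp]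
            exact rank_arith₁ (Nat.find_min' hq hs) (by simp only [fsize]; omega)
      · exact absurd ht (by simp [gameU, posTurn])
    | or φ' ψ' =>
      cases b
      · exact absurd ht (by simp [gameU, posTurn])
      · rw [EG_or_t] at hspec
        rcases hspec with hs | hs
        · have hq : ∃ m, EG M m e s' true φ' := ⟨kp, hs⟩
          refine ⟨⟨φ', e, s', true⟩, UStep.orLeft .., ⟨hq, ?_, henv⟩, ?_⟩
          · exact subs_trans φ _ _ (List.mem_cons_of_mem _ (List.mem_append_left _ (mem_subs_self _))) hsub
          · rw [dif_pos hq, dif_pos hEp, ← hkp]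
            exact rank_arith₁ (Nat.find_min' hq hs) (by simp only [fsize]; omega)
        · have hq : ∃ m, EG M m e s' true ψ' := ⟨kp, hs⟩
          refine ⟨⟨ψ', e, s', true⟩, UStep.orRight .., ⟨hq, ?_, henv⟩, ?_⟩
          · exact subs_trans φ _ _ (List.mem_cons_of_mem _ (List.mem_append_right _ (mem_subs_self _))) hsub
          · rw [dif_pos hq, dif_pos hEp, ← hkp]
            exact rank_arith₁ (Nat.find_min' hq hs) (by simp only [fsize]; omega)
    | ex x φ' =>
      cases b
      · exact absurd ht (by simp [gameU, posTurn])
      · rw [EG_ex_t] at hspec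
        obtain ⟨a, ha⟩ := hspec
        have hq : ∃ m, EG M m e (Function.update s' x a) true φ' := ⟨kp, ha⟩
        refine ⟨⟨φ', e, Function.update s' x a, true⟩, UStep.exStep .., ⟨hq, ?_, henv⟩, ?_⟩
        · exact subs_trans φ _ _ (List.mem_cons_of_mem _ (mem_subs_self _)) hsub
        · rw [dif_pos hq, dif_pos hEp, ← hkp]
          exact rank_arith₁ (Nat.find_min' hq ha) (by simp only [fsize]; omega)
    | all x φ' =>
      cases b
      · rw [EG_all_f] at hspec
        obtain ⟨a, ha⟩ := hspec
        have hq : ∃ m, EG M m e (Function.update s' x a) false φ' := ⟨kp, ha⟩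
        refine ⟨⟨φ', e, Function.update s' x a, false⟩, UStep.allStep .., ⟨hq, ?_, henv⟩, ?_⟩
        · exact subs_trans φ _ _ (List.mem_cons_of_mem _ (mem_subs_self _)) hsub
        · rw [dif_pos hq, dif_pos hEp, ← hkp]
          exact rank_arith₁ (Nat.find_min' hq ha) (by simp only [fsize]; omega)
      · exact absurd ht (by simp [gameU, posTurn])
    | lab L φ' =>
      rw [EG_lab] at hspec
      have hq : ∃ m, EG M m (Function.update e L (some (.lab L φ'))) s' b φ' := ⟨kp, hspec⟩
      refine ⟨⟨φ', Function.update e L (some (.lab L φ')), s', b⟩, UStep.labStep ..,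
        ⟨hq, ?_, ?_⟩, ?_⟩
      · exact subs_trans φ _ _ (List.mem_cons_of_mem _ (mem_subs_self _)) hsub
      · intro L' χ hc
        simp only at hc
        rcases eq_or_ne L' L with rfl | hne
        · rw [Function.update_self] at hc
          cases hc
          exact hsub
        · rw [Function.update_of_ne hne] at hc
          exact henv L' χ hc
      · rw [dif_pos hq, dif_pos hEp, ← hkp]
        exact rank_arith₁ (Nat.find_min' hq hspec) (by simp only [fsize]; omega)
  · -- Abelard's moves
    rintro p ⟨hEp, hsub, henv⟩ ht q hq
    have hspec := Nat.find_spec hEp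
    have hq' : UStep M p q := hq
    cases hq' with
    | neg φ' e s' b => exact absurd ht (by simp [gameU, posTurn])
    | andLeft φ' ψ' e s' b =>
      cases b
      · exact absurd ht (by simp [gameU, posTurn])
      · rw [EG_and_t] at hspec
        have hq2 : ∃ m, EG M m e s' true φ' := ⟨_, hspec.1⟩
        refine ⟨⟨hq2, subs_trans φ _ _ (List.mem_cons_of_mem _ (List.mem_append_left _ (mem_subs_self _))) hsub, henv⟩, ?_⟩
        exact rankE_lt₁ φ hEp hq2 (Nat.find_min' hq2 hspec.1) (by dsimp only; simp only [fsize]; omega)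
    | andRight φ' ψ' e s' b =>
      cases b
      · exact absurd ht (by simp [gameU, posTurn])
      · rw [EG_and_t] at hspec
        have hq2 : ∃ m, EG M m e s' true ψ' := ⟨_, hspec.2⟩
        refine ⟨⟨hq2, subs_trans φ _ _ (List.mem_cons_of_mem _ (List.mem_append_right _ (mem_subs_self _))) hsub, henv⟩, ?_⟩
        exact rankE_lt₁ φ hEp hq2 (Nat.find_min' hq2 hspec.2) (by dsimp only; simp only [fsize]; omega)
    | orLeft φ' ψ' e s' b =>
      cases b
      · rw [EG_or_f] at hspec
        have hq2 : ∃ m, EG M m e s' false φ' := ⟨_, hspec.1⟩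
        refine ⟨⟨hq2, subs_trans φ _ _ (List.mem_cons_of_mem _ (List.mem_append_left _ (mem_subs_self _))) hsub, henv⟩, ?_⟩
        exact rankE_lt₁ φ hEp hq2 (Nat.find_min' hq2 hspec.1) (by dsimp only; simp only [fsize]; omega)
      · exact absurd ht (by simp [gameU, posTurn])
    | orRight φ' ψ' e s' b =>
      cases b
      · rw [EG_or_f] at hspec
        have hq2 : ∃ m, EG M m e s' false ψ' := ⟨_, hspec.2⟩
        refine ⟨⟨hq2, subs_trans φ _ _ (List.mem_cons_of_mem _ (List.mem_append_right _ (mem_subs_self _))) hsub, henv⟩, ?_⟩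
        exact rankE_lt₁ φ hEp hq2 (Nat.find_min' hq2 hspec.2) (by dsimp only; simp only [fsize]; omega)
      · exact absurd ht (by simp [gameU, posTurn])
    | exStep x φ' e s' b a =>
      cases b
      · rw [EG_ex_f] at hspec
        have hq2 : ∃ m, EG M m e (Function.update s' x a) false φ' := ⟨_, hspec a⟩
        refine ⟨⟨hq2, subs_trans φ _ _ (List.mem_cons_of_mem _ (mem_subs_self _)) hsub, henv⟩, ?_⟩
        exact rankE_lt₁ φ hEp hq2 (Nat.find_min' hq2 (hspec a)) (by dsimp only; simp only [fsize]; omega)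
      · exact absurd ht (by simp [gameU, posTurn])
    | allStep x φ' e s' b a =>
      cases b
      · exact absurd ht (by simp [gameU, posTurn])
      · rw [EG_all_t] at hspec
        have hq2 : ∃ m, EG M m e (Function.update s' x a) true φ' := ⟨_, hspec a⟩
        refine ⟨⟨hq2, subs_trans φ _ _ (List.mem_cons_of_mem _ (mem_subs_self _)) hsub, henv⟩, ?_⟩
        exact rankE_lt₁ φ hEp hq2 (Nat.find_min' hq2 (hspec a)) (by dsimp only; simp only [fsize]; omega)
    | labStep L φ' e s' b => exact absurd ht (by simp [gameU, posTurn])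
    | claimStep L e s' b χ hL => exact absurd ht (by simp [gameU, posTurn])

end GameU

/-! ## Region instantiations for the bounded game -/

section GameO

open SCLFormula

variable {V : Vocab} {M : Struct.{u} V}

/-- If Eloise's value holds at some level, she wins the bounded game `G_ω`. -/
theorem eloiseO_of_EG (φ : SCLFormula V) (s : ℕ → M.Dom) (k : ℕ)
    (h : EG M k (fun _ => none) s true φ) :
    (gameOmega M φ s).HasWinningStrategy .eloise .start := by
  classical
  refine (gameOmega M φ s).hasWinningStrategy_of_region .eloise _
    (fun g => match g with
      | .start => True
      | .mid _ => True
      | .inner p m => EG M m p.env p.asg p.pol p.form ∧ p.form ∈ subs φ ∧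
          ∀ L χ, p.env L = some χ → χ ∈ subs φ)
    (fun g => match g with
      | .start => ((2 : ℕ), (0 : ℕ))
      | .mid _ => (1, 0)
      | .inner p m => (0, m * (fsize φ + 1) + fsize p.form))
    (Prod.Lex (· < ·) (· < ·))
    (WellFounded.prod_lex Nat.lt_wfRel.wf Nat.lt_wfRel.wf)
    trivial ?_ ?_ ?_
  · -- dead ends
    intro g hW hd
    cases g with
    | start => exact (hd _ (GOStep.abelardPick 0)).elim
    | mid n' => exact (hd _ (GOStep.eloisePick n' n' (le_refl n'))).elim
    | inner p m =>
      obtain ⟨ψ, e, s', b⟩ := p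
      obtain ⟨hEG, hsub, henv⟩ := hW
      simp only at hEG hsub henv
      cases ψ with
      | bot =>
        rw [EG_bot] at hEG
        refine ⟨trivial, ?_⟩
        simp only [atomSat]
        subst hEG
        simp
      | eq x y =>
        rw [EG_eq] at hEG
        exact ⟨trivial, by simpa [atomSat] using hEG⟩
      | rel R a =>
        rw [EG_rel] at hEG
        exact ⟨trivial, by simpa [atomSat] using hEG⟩
      | claim L =>
        cases m with
        | zero => exact absurd hEG (EG_claim_zero e s' b L)
        | succ m =>
          cases hL : e L with
          | none => exact absurd hEG (EG_claim_none _ _ _ _ _ hL)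
          | some χ =>
            exact (hd _ (GOStep.play _ _ _ _ (BStep.claimStep L e s' b χ m hL))).elim
      | not φ' => exact (hd _ (GOStep.play _ _ _ _ (BStep.neg φ' e s' b m))).elim
      | and φ' ψ' => exact (hd _ (GOStep.play _ _ _ _ (BStep.andLeft φ' ψ' e s' b m))).elim
      | or φ' ψ' => exact (hd _ (GOStep.play _ _ _ _ (BStep.orLeft φ' ψ' e s' b m))).elim
      | ex x φ' =>
        obtain ⟨a⟩ := M.dom_nonempty
        exact (hd _ (GOStep.play _ _ _ _ (BStep.exStep x φ' e s' b m a))).elim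
      | all x φ' =>
        obtain ⟨a⟩ := M.dom_nonempty
        exact (hd _ (GOStep.play _ _ _ _ (BStep.allStep x φ' e s' b m a))).elim
      | lab L φ' => exact (hd _ (GOStep.play _ _ _ _ (BStep.labStep L φ' e s' b m))).elim
  · -- Eloise's moves
    intro g hW ht hnd
    cases g with
    | start => exact absurd ht (by simp [gameOmega, goTurn])
    | mid n' =>
      refine ⟨.inner (initPos φ s) (max k n'), GOStep.eloisePick n' _ (le_max_right _ _),
        ⟨EG_mono_le (le_max_left _ _) h, mem_subs_self φ,
          fun L χ hc => absurd hc (by simp [initPos])⟩, ?_⟩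
      exact Prod.Lex.left _ _ (by omega)
    | inner p m =>
      obtain ⟨ψ, e, s', b⟩ := p
      obtain ⟨hEG, hsub, henv⟩ := hW
      simp only at hEG hsub henv
      cases ψ with
      | bot => exact absurd (fun q hq => by cases hq with | play _ _ _ _ hb => cases hb) hnd
      | eq x y => exact absurd (fun q hq => by cases hq with | play _ _ _ _ hb => cases hb) hnd
      | rel R a => exact absurd (fun q hq => by cases hq with | play _ _ _ _ hb => cases hb) hnd
      | claim L =>
        cases m with
        | zero => exact absurd hEG (EG_claim_zero e s' b L)
        | succ m =>
          cases hL : e L with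
          | none => exact absurd hEG (EG_claim_none _ _ _ _ _ hL)
          | some χ =>
            rw [EG_claim_succ _ _ _ _ _ _ hL] at hEG
            refine ⟨.inner ⟨χ, e, s', b⟩ m,
              GOStep.play _ _ _ _ (BStep.claimStep L e s' b χ m hL),
              ⟨hEG, henv L χ hL, henv⟩, ?_⟩
            refine Prod.Lex.right _ ?_
            exact rank_arith₂ (Nat.lt_succ_self m)
              (Nat.lt_succ_of_le (fsize_le_of_mem_subs φ χ (henv L χ hL)))
      | not φ' =>
        rw [EG_not] at hEG
        refine ⟨.inner ⟨φ', e, s', !b⟩ m, GOStep.play _ _ _ _ (BStep.neg φ' e s' b m),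
          ⟨hEG, subs_trans φ _ _ (List.mem_cons_of_mem _ (mem_subs_self _)) hsub, henv⟩, ?_⟩
        exact Prod.Lex.right _ (rank_arith₁ (le_refl m) (by simp only [fsize]; omega))
      | and φ' ψ' =>
        cases b
        · rw [EG_and_f] at hEG
          rcases hEG with hs | hs
          · refine ⟨.inner ⟨φ', e, s', false⟩ m, GOStep.play _ _ _ _ (BStep.andLeft φ' ψ' e s' false m),
              ⟨hs, subs_trans φ _ _ (List.mem_cons_of_mem _ (List.mem_append_left _ (mem_subs_self _))) hsub, henv⟩, ?_⟩
            exact Prod.Lex.right _ (rank_arith₁ (le_refl m) (by simp only [fsize]; omega))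
          · refine ⟨.inner ⟨ψ', e, s', false⟩ m, GOStep.play _ _ _ _ (BStep.andRight φ' ψ' e s' false m),
              ⟨hs, subs_trans φ _ _ (List.mem_cons_of_mem _ (List.mem_append_right _ (mem_subs_self _))) hsub, henv⟩, ?_⟩
            exact Prod.Lex.right _ (rank_arith₁ (le_refl m) (by simp only [fsize]; omega))
        · exact absurd ht (by simp [gameOmega, goTurn, posTurn])
      | or φ' ψ' =>
        cases b
        · exact absurd ht (by simp [gameOmega, goTurn, posTurn])
        · rw [EG_or_t] at hEG
          rcases hEG with hs | hs
          · refine ⟨.inner ⟨φ', e, s', true⟩ m, GOStep.play _ _ _ _ (BStep.orLeft φ' ψ' e s' true m),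
              ⟨hs, subs_trans φ _ _ (List.mem_cons_of_mem _ (List.mem_append_left _ (mem_subs_self _))) hsub, henv⟩, ?_⟩
            exact Prod.Lex.right _ (rank_arith₁ (le_refl m) (by simp only [fsize]; omega))
          · refine ⟨.inner ⟨ψ', e, s', true⟩ m, GOStep.play _ _ _ _ (BStep.orRight φ' ψ' e s' true m),
              ⟨hs, subs_trans φ _ _ (List.mem_cons_of_mem _ (List.mem_append_right _ (mem_subs_self _))) hsub, henv⟩, ?_⟩
            exact Prod.Lex.right _ (rank_arith₁ (le_refl m) (by simp only [fsize]; omega))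
      | ex x φ' =>
        cases b
        · exact absurd ht (by simp [gameOmega, goTurn, posTurn])
        · rw [EG_ex_t] at hEG
          obtain ⟨a, ha⟩ := hEG
          refine ⟨.inner ⟨φ', e, Function.update s' x a, true⟩ m,
            GOStep.play _ _ _ _ (BStep.exStep x φ' e s' true m a),
            ⟨ha, subs_trans φ _ _ (List.mem_cons_of_mem _ (mem_subs_self _)) hsub, henv⟩, ?_⟩
          exact Prod.Lex.right _ (rank_arith₁ (le_refl m) (by simp only [fsize]; omega))
      | all x φ' =>
        cases b
        · rw [EG_all_f] at hEG
          obtain ⟨a, ha⟩ := hEG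
          refine ⟨.inner ⟨φ', e, Function.update s' x a, false⟩ m,
            GOStep.play _ _ _ _ (BStep.allStep x φ' e s' false m a),
            ⟨ha, subs_trans φ _ _ (List.mem_cons_of_mem _ (mem_subs_self _)) hsub, henv⟩, ?_⟩
          exact Prod.Lex.right _ (rank_arith₁ (le_refl m) (by simp only [fsize]; omega))
        · exact absurd ht (by simp [gameOmega, goTurn, posTurn])
      | lab L φ' =>
        rw [EG_lab] at hEG
        refine ⟨.inner ⟨φ', Function.update e L (some (.lab L φ')), s', b⟩ m,
          GOStep.play _ _ _ _ (BStep.labStep L φ' e s' b m),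
          ⟨hEG, subs_trans φ _ _ (List.mem_cons_of_mem _ (mem_subs_self _)) hsub, ?_⟩, ?_⟩
        · intro L' χ hc
          simp only at hc
          rcases eq_or_ne L' L with rfl | hne
          · rw [Function.update_self] at hc
            cases hc
            exact hsub
          · rw [Function.update_of_ne hne] at hc
            exact henv L' χ hc
        · exact Prod.Lex.right _ (rank_arith₁ (le_refl m) (by simp only [fsize]; omega))
  · -- Abelard's moves
    intro g hW ht q hq
    have hq' : GOStep M φ s g q := hq
    cases hq' with
    | abelardPick n' => exact ⟨trivial, Prod.Lex.left _ _ (by omega)⟩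
    | eloisePick n' n hn => exact (ht rfl).elim
    | play p q m k' hb =>
      obtain ⟨hEG, hsub, henv⟩ := hW
      cases hb with
      | neg φ' e s' b => exact (ht rfl).elim
      | andLeft φ' ψ' e s' b n =>
        cases b
        · exact (ht rfl).elim
        · rw [EG_and_t] at hEG
          refine ⟨⟨hEG.1, subs_trans φ _ _ (List.mem_cons_of_mem _ (List.mem_append_left _ (mem_subs_self _))) hsub, henv⟩, ?_⟩
          exact Prod.Lex.right _ (rank_arith₁ (le_refl _) (by simp only [fsize]; omega))
      | andRight φ' ψ' e s' b n =>
        cases b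
        · exact (ht rfl).elim
        · rw [EG_and_t] at hEG
          refine ⟨⟨hEG.2, subs_trans φ _ _ (List.mem_cons_of_mem _ (List.mem_append_right _ (mem_subs_self _))) hsub, henv⟩, ?_⟩
          exact Prod.Lex.right _ (rank_arith₁ (le_refl _) (by simp only [fsize]; omega))
      | orLeft φ' ψ' e s' b n =>
        cases b
        · rw [EG_or_f] at hEG
          refine ⟨⟨hEG.1, subs_trans φ _ _ (List.mem_cons_of_mem _ (List.mem_append_left _ (mem_subs_self _))) hsub, henv⟩, ?_⟩
          exact Prod.Lex.right _ (rank_arith₁ (le_refl _) (by simp only [fsize]; omega))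
        · exact (ht rfl).elim
      | orRight φ' ψ' e s' b n =>
        cases b
        · rw [EG_or_f] at hEG
          refine ⟨⟨hEG.2, subs_trans φ _ _ (List.mem_cons_of_mem _ (List.mem_append_right _ (mem_subs_self _))) hsub, henv⟩, ?_⟩
          exact Prod.Lex.right _ (rank_arith₁ (le_refl _) (by simp only [fsize]; omega))
        · exact (ht rfl).elim
      | exStep x φ' e s' b n a =>
        cases b
        · rw [EG_ex_f] at hEG
          refine ⟨⟨hEG a, subs_trans φ _ _ (List.mem_cons_of_mem _ (mem_subs_self _)) hsub, henv⟩, ?_⟩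
          exact Prod.Lex.right _ (rank_arith₁ (le_refl _) (by simp only [fsize]; omega))
        · exact (ht rfl).elim
      | allStep x φ' e s' b n a =>
        cases b
        · exact (ht rfl).elim
        · rw [EG_all_t] at hEG
          refine ⟨⟨hEG a, subs_trans φ _ _ (List.mem_cons_of_mem _ (mem_subs_self _)) hsub, henv⟩, ?_⟩
          exact Prod.Lex.right _ (rank_arith₁ (le_refl _) (by simp only [fsize]; omega))
      | labStep L φ' e s' b n => exact (ht rfl).elim
      | claimStep L e s' b χ n hL => exact (ht rfl).elim

/-- If Eloise's value fails at every level, she has no winning strategy in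
the bounded game `G_ω`. -/
theorem not_eloiseO_of_not_EG (φ : SCLFormula V) (s : ℕ → M.Dom)
    (h : ∀ n, ¬ EG M n (fun _ => none) s true φ) :
    ¬ (gameOmega M φ s).HasWinningStrategy .eloise .start := by
  apply (gameOmega M φ s).not_hasWinningStrategy_of_region .eloise _
    (fun g => match g with
      | .start => True
      | .mid _ => True
      | .inner p m => ¬ EG M m p.env p.asg p.pol p.form)
  · trivial
  · -- dead ends
    intro g hR hd
    cases g with
    | start => exact fun hw => hw
    | mid n' => exact fun hw => hw
    | inner p m =>
      obtain ⟨ψ, e, s', b⟩ := p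
      simp only at hR
      rintro ⟨hatom, hiff⟩
      simp only at hiff
      cases ψ with
      | bot =>
        cases b
        · exact hR ((EG_bot _ _ _ _).mpr rfl)
        · simp only [atomSat] at hiff
          simp at hiff
      | eq x y => exact hR ((EG_eq _ _ _ _ _ _).mpr (by simpa [atomSat] using hiff))
      | rel R a => exact hR ((EG_rel _ _ _ _ _ _).mpr (by simpa [atomSat] using hiff))
      | claim L => exact hatom
      | not φ' => exact hatom
      | and φ' ψ' => exact hatom
      | or φ' ψ' => exact hatom
      | ex x φ' => exact hatom
      | all x φ' => exact hatom
      | lab L φ' => exact hatom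
  · -- Eloise's moves
    intro g hR ht q hq
    have hq' : GOStep M φ s g q := hq
    cases hq' with
    | abelardPick n' => exact absurd ht (by simp [gameOmega, goTurn])
    | eloisePick n' n hn => exact h n
    | play p q m k' hb =>
      simp only at hR
      cases hb with
      | neg φ' e s' b => exact fun h' => hR (by rw [EG_not]; exact h')
      | andLeft φ' ψ' e s' b n =>
        cases b
        · exact fun h' => hR (by rw [EG_and_f]; exact Or.inl h')
        · exact absurd ht (by simp [gameOmega, goTurn, posTurn])
      | andRight φ' ψ' e s' b n =>
        cases b
        · exact fun h' => hR (by rw [EG_and_f]; exact Or.inr h')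
        · exact absurd ht (by simp [gameOmega, goTurn, posTurn])
      | orLeft φ' ψ' e s' b n =>
        cases b
        · exact absurd ht (by simp [gameOmega, goTurn, posTurn])
        · exact fun h' => hR (by rw [EG_or_t]; exact Or.inl h')
      | orRight φ' ψ' e s' b n =>
        cases b
        · exact absurd ht (by simp [gameOmega, goTurn, posTurn])
        · exact fun h' => hR (by rw [EG_or_t]; exact Or.inr h')
      | exStep x φ' e s' b n a =>
        cases b
        · exact absurd ht (by simp [gameOmega, goTurn, posTurn])
        · exact fun h' => hR (by rw [EG_ex_t]; exact ⟨a, h'⟩)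
      | allStep x φ' e s' b n a =>
        cases b
        · exact fun h' => hR (by rw [EG_all_f]; exact ⟨a, h'⟩)
        · exact absurd ht (by simp [gameOmega, goTurn, posTurn])
      | labStep L φ' e s' b n => exact fun h' => hR (by rw [EG_lab]; exact h')
      | claimStep L e s' b χ n hL =>
        exact fun h' => hR (by rw [EG_claim_succ _ _ _ _ _ _ hL]; exact h')
  · -- Abelard's moves
    intro g hR ht hnd
    cases g with
    | start => exact ⟨.mid 0, GOStep.abelardPick 0, trivial⟩
    | mid n' => exact (ht rfl).elim
    | inner p m =>
      obtain ⟨ψ, e, s', b⟩ := p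
      simp only at hR
      cases ψ with
      | bot => exact (ht rfl).elim
      | eq x y => exact (ht rfl).elim
      | rel R a => exact (ht rfl).elim
      | claim L => exact (ht rfl).elim
      | not φ' => exact (ht rfl).elim
      | lab L φ' => exact (ht rfl).elim
      | and φ' ψ' =>
        cases b
        · exact (ht rfl).elim
        · rw [EG_and_t] at hR
          rw [not_and_or] at hR
          rcases hR with hR | hR
          · exact ⟨.inner ⟨φ', e, s', true⟩ m, GOStep.play _ _ _ _ (BStep.andLeft φ' ψ' e s' true m), hR⟩
          · exact ⟨.inner ⟨ψ', e, s', true⟩ m, GOStep.play _ _ _ _ (BStep.andRight φ' ψ' e s' true m), hR⟩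
      | or φ' ψ' =>
        cases b
        · rw [EG_or_f] at hR
          rw [not_and_or] at hR
          rcases hR with hR | hR
          · exact ⟨.inner ⟨φ', e, s', false⟩ m, GOStep.play _ _ _ _ (BStep.orLeft φ' ψ' e s' false m), hR⟩
          · exact ⟨.inner ⟨ψ', e, s', false⟩ m, GOStep.play _ _ _ _ (BStep.orRight φ' ψ' e s' false m), hR⟩
        · exact (ht rfl).elim
      | ex x φ' =>
        cases b
        · rw [EG_ex_f] at hR
          push_neg at hR
          obtain ⟨a, ha⟩ := hR
          exact ⟨.inner ⟨φ', e, Function.update s' x a, false⟩ m,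
            GOStep.play _ _ _ _ (BStep.exStep x φ' e s' false m a), ha⟩
        · exact (ht rfl).elim
      | all x φ' =>
        cases b
        · exact (ht rfl).elim
        · rw [EG_all_t] at hR
          push_neg at hR
          obtain ⟨a, ha⟩ := hR
          exact ⟨.inner ⟨φ', e, Function.update s' x a, true⟩ m,
            GOStep.play _ _ _ _ (BStep.allStep x φ' e s' true m a), ha⟩

/-- If Abelard's value fails at every level, he has no winning strategy in
the bounded game `G_ω`. -/
theorem not_abelardO_of_not_AG (φ : SCLFormula V) (s : ℕ → M.Dom)
    (h : ∀ n, ¬ AG M n (fun _ => none) s true φ) :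
    ¬ (gameOmega M φ s).HasWinningStrategy .abelard .start := by
  apply (gameOmega M φ s).not_hasWinningStrategy_of_region .abelard _
    (fun g => match g with
      | .start => True
      | .mid _ => True
      | .inner p m => ¬ AG M m p.env p.asg p.pol p.form)
  · trivial
  · -- dead ends
    intro g hR hd
    cases g with
    | start => exact fun hw => hw
    | mid n' => exact fun hw => hw
    | inner p m =>
      obtain ⟨ψ, e, s', b⟩ := p
      simp only at hR
      rintro ⟨hatom, hiff⟩
      simp only at hiff
      cases ψ with
      | bot =>
        cases b
        · simp only [atomSat] at hiff
          simp at hiff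
        · exact hR ((AG_bot _ _ _ _).mpr rfl)
      | eq x y =>
        simp only [atomSat] at hiff
        refine hR ((AG_eq _ _ _ _ _ _).mpr ?_)
        cases b <;> simp at hiff <;> simpa using hiff
      | rel R a =>
        simp only [atomSat] at hiff
        refine hR ((AG_rel _ _ _ _ _ _).mpr ?_)
        cases b <;> simp at hiff <;> simpa using hiff
      | claim L => exact hatom
      | not φ' => exact hatom
      | and φ' ψ' => exact hatom
      | or φ' ψ' => exact hatom
      | ex x φ' => exact hatom
      | all x φ' => exact hatom
      | lab L φ' => exact hatom
  · -- Abelard's moves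
    intro g hR ht q hq
    have hq' : GOStep M φ s g q := hq
    cases hq' with
    | abelardPick n' => exact trivial
    | eloisePick n' n hn => exact absurd ht (by simp [gameOmega, goTurn])
    | play p q m k' hb =>
      simp only at hR
      cases hb with
      | neg φ' e s' b => exact absurd ht (by simp [gameOmega, goTurn, posTurn])
      | andLeft φ' ψ' e s' b n =>
        cases b
        · exact absurd ht (by simp [gameOmega, goTurn, posTurn])
        · exact fun h' => hR (by rw [AG_and_t]; exact Or.inl h')
      | andRight φ' ψ' e s' b n =>
        cases b
        · exact absurd ht (by simp [gameOmega, goTurn, posTurn])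
        · exact fun h' => hR (by rw [AG_and_t]; exact Or.inr h')
      | orLeft φ' ψ' e s' b n =>
        cases b
        · exact fun h' => hR (by rw [AG_or_f]; exact Or.inl h')
        · exact absurd ht (by simp [gameOmega, goTurn, posTurn])
      | orRight φ' ψ' e s' b n =>
        cases b
        · exact fun h' => hR (by rw [AG_or_f]; exact Or.inr h')
        · exact absurd ht (by simp [gameOmega, goTurn, posTurn])
      | exStep x φ' e s' b n a =>
        cases b
        · exact fun h' => hR (by rw [AG_ex_f]; exact ⟨a, h'⟩)
        · exact absurd ht (by simp [gameOmega, goTurn, posTurn])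
      | allStep x φ' e s' b n a =>
        cases b
        · exact absurd ht (by simp [gameOmega, goTurn, posTurn])
        · exact fun h' => hR (by rw [AG_all_t]; exact ⟨a, h'⟩)
      | labStep L φ' e s' b n => exact absurd ht (by simp [gameOmega, goTurn, posTurn])
      | claimStep L e s' b χ n hL => exact absurd ht (by simp [gameOmega, goTurn, posTurn])
  · -- Eloise's moves
    intro g hR ht hnd
    cases g with
    | start => exact (ht rfl).elim
    | mid n' => exact ⟨.inner (initPos φ s) n', GOStep.eloisePick n' n' (le_refl n'), h n'⟩
    | inner p m =>
      obtain ⟨ψ, e, s', b⟩ := p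
      simp only at hR
      cases ψ with
      | bot => exact absurd (fun q hq => by cases hq with | play _ _ _ _ hb => cases hb) hnd
      | eq x y => exact absurd (fun q hq => by cases hq with | play _ _ _ _ hb => cases hb) hnd
      | rel R a => exact absurd (fun q hq => by cases hq with | play _ _ _ _ hb => cases hb) hnd
      | claim L =>
        rw [GameArena.DeadEnd] at hnd
        push_neg at hnd
        obtain ⟨q, hq⟩ := hnd
        have hq2 : GOStep M φ s _ q := hq
        cases hq2 with
        | play p q m k' hb =>
          cases hb with
          | claimStep L e s' b χ n hL =>
            refine ⟨.inner ⟨χ, e, s', b⟩ _, GOStep.play _ _ _ _ (BStep.claimStep L e s' b χ _ hL), ?_⟩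
            exact fun h' => hR (by rw [AG_claim_succ _ _ _ _ _ _ hL]; exact h')
      | not φ' =>
        exact ⟨.inner ⟨φ', e, s', !b⟩ m, GOStep.play _ _ _ _ (BStep.neg φ' e s' b m),
          fun h' => hR (by rw [AG_not]; exact h')⟩
      | lab L φ' =>
        exact ⟨.inner ⟨φ', Function.update e L (some (.lab L φ')), s', b⟩ m,
          GOStep.play _ _ _ _ (BStep.labStep L φ' e s' b m),
          fun h' => hR (by rw [AG_lab]; exact h')⟩
      | and φ' ψ' =>
        cases b
        · rw [AG_and_f] at hR
          rw [not_and_or] at hR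
          rcases hR with hR | hR
          · exact ⟨.inner ⟨φ', e, s', false⟩ m, GOStep.play _ _ _ _ (BStep.andLeft φ' ψ' e s' false m), hR⟩
          · exact ⟨.inner ⟨ψ', e, s', false⟩ m, GOStep.play _ _ _ _ (BStep.andRight φ' ψ' e s' false m), hR⟩
        · exact (ht rfl).elim
      | or φ' ψ' =>
        cases b
        · exact (ht rfl).elim
        · rw [AG_or_t] at hR
          rw [not_and_or] at hR
          rcases hR with hR | hR
          · exact ⟨.inner ⟨φ', e, s', true⟩ m, GOStep.play _ _ _ _ (BStep.orLeft φ' ψ' e s' true m), hR⟩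
          · exact ⟨.inner ⟨ψ', e, s', true⟩ m, GOStep.play _ _ _ _ (BStep.orRight φ' ψ' e s' true m), hR⟩
      | ex x φ' =>
        cases b
        · exact (ht rfl).elim
        · rw [AG_ex_t] at hR
          push_neg at hR
          obtain ⟨a, ha⟩ := hR
          exact ⟨.inner ⟨φ', e, Function.update s' x a, true⟩ m,
            GOStep.play _ _ _ _ (BStep.exStep x φ' e s' true m a), ha⟩
      | all x φ' =>
        cases b
        · rw [AG_all_f] at hR
          push_neg at hR
          obtain ⟨a, ha⟩ := hR
          exact ⟨.inner ⟨φ', e, Function.update s' x a, false⟩ m,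
            GOStep.play _ _ _ _ (BStep.allStep x φ' e s' false m a), ha⟩
        · exact (ht rfl).elim

end GameO



/-! ## Free-variable congruence -/

section Congr

open SCLFormula

variable {V : Vocab}

lemma FOSat_congr (M : Struct.{u} V) : ∀ (ψ : SCLFormula V), ψ.IsFO →
    ∀ (s s' : ℕ → M.Dom), (∀ v ∈ ψ.freeVars, s v = s' v) → (FOSat M s ψ ↔ FOSat M s' ψ) := by
  intro ψ
  induction ψ with
  | bot => intro _ s s' _; exact Iff.rfl
  | eq x y =>
    intro _ s s' h
    have hx := h x (by simp [freeVars])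
    have hy := h y (by simp [freeVars])
    simp only [FOSat]
    rw [hx, hy]
  | rel R a =>
    intro _ s s' h
    have : (fun i => s (a i)) = fun i => s' (a i) := by
      funext i
      exact h (a i) (Finset.mem_image_of_mem a (Finset.mem_univ i))
    simp only [FOSat]
    rw [this]
  | claim L => intro hFO; exact hFO.elim
  | not φ ih =>
    intro hFO s s' h
    simp only [FOSat]
    rw [ih hFO s s' h]
  | and φ ψ ih1 ih2 =>
    intro hFO s s' h
    simp only [FOSat]
    rw [ih1 hFO.1 s s' (fun v hv => h v (by simp [freeVars]; exact Or.inl hv)),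
      ih2 hFO.2 s s' (fun v hv => h v (by simp [freeVars]; exact Or.inr hv))]
  | or φ ψ ih1 ih2 =>
    intro hFO s s' h
    simp only [FOSat]
    rw [ih1 hFO.1 s s' (fun v hv => h v (by simp [freeVars]; exact Or.inl hv)),
      ih2 hFO.2 s s' (fun v hv => h v (by simp [freeVars]; exact Or.inr hv))]
  | ex x φ ih =>
    intro hFO s s' h
    simp only [FOSat]
    refine exists_congr fun a => ih hFO _ _ ?_
    intro v hv
    rcases eq_or_ne v x with rfl | hne
    · rw [Function.update_self, Function.update_self]
    · rw [Function.update_of_ne hne, Function.update_of_ne hne]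
      exact h v (by simp [freeVars]; exact ⟨hv, hne⟩)
  | all x φ ih =>
    intro hFO s s' h
    simp only [FOSat]
    refine forall_congr' fun a => ih hFO _ _ ?_
    intro v hv
    rcases eq_or_ne v x with rfl | hne
    · rw [Function.update_self, Function.update_self]
    · rw [Function.update_of_ne hne, Function.update_of_ne hne]
      exact h v (by simp [freeVars]; exact ⟨hv, hne⟩)
  | lab L φ ih => intro hFO; exact hFO.elim

end Congr

/-! ## Ultraproducts and Łoś's theorem -/

section Ultra

open Filter SCLFormula

variable {V : Vocab} (Mi : ℕ → Struct.{u} V) (F : Ultrafilter ℕ)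

def uSetoid : Setoid (∀ i, (Mi i).Dom) where
  r g h := ∀ᶠ i in (F : Filter ℕ), g i = h i
  iseqv := by
    refine ⟨fun g => Eventually.of_forall fun _ => rfl, fun h => h.mono fun i hi => hi.symm,
      fun h1 h2 => (h1.and h2).mono fun i hi => hi.1.trans hi.2⟩

/-- The ultraproduct structure. -/
noncomputable def uStruct : Struct.{u} V where
  Dom := Quotient (uSetoid Mi F)
  dom_nonempty := ⟨Quotient.mk _ fun i => (Mi i).dom_nonempty.some⟩
  interp R f := ∀ᶠ i in (F : Filter ℕ), (Mi i).interp R fun j => (f j).out i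

/-- The `i`-th coordinate of an assignment into the ultraproduct. -/
noncomputable def uAsg (s : ℕ → Quotient (uSetoid Mi F)) (i : ℕ) : ℕ → (Mi i).Dom :=
  fun v => (s v).out i

lemma uAsg_update (s : ℕ → Quotient (uSetoid Mi F)) (x : ℕ) (a : Quotient (uSetoid Mi F))
    (i : ℕ) : uAsg Mi F (Function.update s x a) i =
      Function.update (uAsg Mi F s i) x (a.out i) := by
  funext v
  rcases eq_or_ne v x with rfl | hne
  · rw [Function.update_self]
    show (Function.update s v a v).out i = _
    rw [Function.update_self]
  · rw [Function.update_of_ne hne]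
    show (Function.update s x a v).out i = _
    rw [Function.update_of_ne hne]
    rfl

lemma uOut_mk (g : ∀ i, (Mi i).Dom) :
    ∀ᶠ i in (F : Filter ℕ), (Quotient.mk (uSetoid Mi F) g).out i = g i := by
  have h := Quotient.exact (Quotient.out_eq (Quotient.mk (uSetoid Mi F) g))
  exact h

/-- **Łoś's theorem** for the first-order fragment. -/
theorem los : ∀ (ψ : SCLFormula V), ψ.IsFO → ∀ (s : ℕ → Quotient (uSetoid Mi F)),
    (FOSat (uStruct Mi F) s ψ ↔ ∀ᶠ i in (F : Filter ℕ), FOSat (Mi i) (uAsg Mi F s i) ψ) := by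
  intro ψ
  induction ψ with
  | bot =>
    intro _ s
    show False ↔ _
    constructor
    · exact fun h => h.elim
    · intro h
      obtain ⟨i, hi⟩ := h.exists
      exact hi
  | eq x y =>
    intro _ s
    show s x = s y ↔ _
    constructor
    · intro h
      exact Eventually.of_forall fun i => by show (s x).out i = (s y).out i; rw [h]
    · intro h
      have h1 : Quotient.mk (uSetoid Mi F) (s x).out = Quotient.mk _ (s y).out :=
        Quotient.sound h
      rw [Quotient.out_eq, Quotient.out_eq] at h1
      exact h1
  | rel R a => intro _ s; exact Iff.rfl
  | claim L => intro hFO; exact hFO.elim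
  | not φ ih =>
    intro hFO s
    show ¬ _ ↔ _
    rw [ih hFO s]
    exact (F.eventually_not (p := fun i => FOSat (Mi i) (uAsg Mi F s i) φ)).symm
  | and φ ψ ih1 ih2 =>
    intro hFO s
    show _ ∧ _ ↔ _
    rw [ih1 hFO.1 s, ih2 hFO.2 s]
    exact eventually_and.symm
  | or φ ψ ih1 ih2 =>
    intro hFO s
    show _ ∨ _ ↔ _
    rw [ih1 hFO.1 s, ih2 hFO.2 s]
    exact (F.eventually_or).symm
  | ex x φ ih =>
    intro hFO s
    show (∃ a, FOSat (uStruct Mi F) (Function.update s x a) φ) ↔ _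
    constructor
    · rintro ⟨a, ha⟩
      erw [ih hFO _] at ha
      refine ha.mono fun i hi => ⟨a.out i, ?_⟩
      erw [uAsg_update] at hi; exact hi
    · intro h
      classical
      set g : ∀ i, (Mi i).Dom := fun i =>
        if hc : ∃ ai, FOSat (Mi i) (Function.update (uAsg Mi F s i) x ai) φ then hc.choose
        else (Mi i).dom_nonempty.some with hg
      refine ⟨Quotient.mk _ g, ?_⟩
      erw [ih hFO _]
      have h1 : ∀ᶠ i in (F : Filter ℕ), FOSat (Mi i) (Function.update (uAsg Mi F s i) x (g i)) φ := by
        refine h.mono fun i hi => ?_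
        obtain ⟨ai, hai⟩ := hi
        have hc : ∃ ai, FOSat (Mi i) (Function.update (uAsg Mi F s i) x ai) φ := ⟨ai, hai⟩
        rw [hg]
        simp only [dif_pos hc]
        exact hc.choose_spec
      have h2 := uOut_mk Mi F g
      refine (h1.and h2).mono fun i hi => ?_
      erw [uAsg_update, hi.2]
      exact hi.1
  | all x φ ih =>
    intro hFO s
    show (∀ a, FOSat (uStruct Mi F) (Function.update s x a) φ) ↔ _
    constructor
    · intro h
      by_contra hc
      rw [← F.eventually_not] at hc
      classical
      set g : ∀ i, (Mi i).Dom := fun i =>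
        if hcc : ∃ ai, ¬ FOSat (Mi i) (Function.update (uAsg Mi F s i) x ai) φ then hcc.choose
        else (Mi i).dom_nonempty.some with hg
      have h1 : ∀ᶠ i in (F : Filter ℕ), ¬ FOSat (Mi i) (Function.update (uAsg Mi F s i) x (g i)) φ := by
        refine hc.mono fun i hi => ?_
        simp only [FOSat] at hi
        rw [not_forall] at hi
        obtain ⟨ai, hai⟩ := hi
        have hcc : ∃ ai, ¬ FOSat (Mi i) (Function.update (uAsg Mi F s i) x ai) φ := ⟨ai, hai⟩
        rw [hg]
        simp only [dif_pos hcc]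
        exact hcc.choose_spec
      have h2 := uOut_mk Mi F g
      have h3 := h (Quotient.mk _ g)
      erw [ih hFO _] at h3
      have h4 := (h3.and (h1.and h2)).exists
      obtain ⟨i, hi1, hi2, hi3⟩ := h4
      erw [uAsg_update, hi3] at hi1
      exact hi2 hi1
    · intro h a
      erw [ih hFO _]
      refine h.mono fun i hi => ?_
      erw [uAsg_update]
      exact hi (a.out i)
  | lab L φ ih => intro hFO; exact hFO.elim

/-- If the ultrafilter extends the cofinite filter, the ultraproduct has the
required saturation property. -/
theorem uStruct_satStruct (hF : (F : Filter ℕ) ≤ Filter.cofinite) :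
    SatStruct (uStruct Mi F) := by
  classical
  intro θ s x hFO hmono hex
  -- levelwise witnesses, eventually
  have hev : ∀ n, ∀ᶠ i in (F : Filter ℕ),
      ∃ ai, FOSat (Mi i) (Function.update (uAsg Mi F s i) x ai) (θ n) := by
    intro n
    obtain ⟨a, ha⟩ := hex n
    erw [los Mi F _ (hFO n) _] at ha
    refine ha.mono fun i hi => ⟨a.out i, ?_⟩
    erw [uAsg_update] at hi; exact hi
  -- the diagonal witness
  set P : ℕ → ℕ → Prop := fun i n =>
    ∃ ai, FOSat (Mi i) (Function.update (uAsg Mi F s i) x ai) (θ n) with hP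
  set g : ∀ i, (Mi i).Dom := fun i =>
    if hc : P i (Nat.findGreatest (P i) i) then hc.choose
    else (Mi i).dom_nonempty.some with hg
  have hmono' : ∀ (i : ℕ) (n m : ℕ), n ≤ m →
      FOSat (Mi i) (Function.update (uAsg Mi F s i) x (g i)) (θ m) →
      FOSat (Mi i) (Function.update (uAsg Mi F s i) x (g i)) (θ n) := by
    intro i n m hnm
    induction hnm with
    | refl => exact id
    | step h ih => exact fun hh => ih (hmono _ _ _ hh)
  refine ⟨Quotient.mk _ g, ?_⟩
  intro n
  erw [los Mi F _ (hFO n) _]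
  have h2 := uOut_mk Mi F g
  have hge : ∀ᶠ i in (F : Filter ℕ), n ≤ i := by
    apply hF
    rw [Filter.mem_cofinite]
    refine Set.Finite.subset (Set.finite_lt_nat n) ?_
    intro i hi
    simpa [Nat.not_le] using hi
  refine (((hev n).and hge).and h2).mono fun i hi => ?_
  obtain ⟨⟨hPn, hni⟩, hout⟩ := hi
  have hkge : n ≤ Nat.findGreatest (P i) i := Nat.le_findGreatest hni hPn
  have hPk : P i (Nat.findGreatest (P i) i) := Nat.findGreatest_spec hni hPn
  have hgood : FOSat (Mi i) (Function.update (uAsg Mi F s i) x (g i))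
      (θ (Nat.findGreatest (P i) i)) := by
    rw [hg]
    simp only [dif_pos hPk]
    exact hPk.choose_spec
  have := hmono' i n _ hkge hgood
  erw [uAsg_update, hout]; assumption

end Ultra


/-! ## Assembly -/

section Assembly

open SCLFormula Filter

variable {V : Vocab}

lemma approximant_eq_APX (φ : SCLFormula V) (n : ℕ) :
    approximant φ n = APX (dE V) n (fun _ => none) true φ := by
  rw [approximant, approx_eq_APX]

lemma approximant_isFO (φ : SCLFormula V) (n : ℕ) : (approximant φ n).IsFO := by
  rw [approximant_eq_APX]
  exact APX_isFO _ dE_isFO n φ _ _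

lemma EG_init_iff (M : Struct.{u} V) (φ : SCLFormula V) (s : ℕ → M.Dom) (n : ℕ) :
    EG M n (fun _ => none) s true φ ↔ FOSat M s (approximant φ n) := by
  rw [EG_true_iff, approximant_eq_APX]

lemma FOSat_approximant_mono (M : Struct.{u} V) (φ : SCLFormula V) (s : ℕ → M.Dom)
    {n m : ℕ} (hnm : n ≤ m) (h : FOSat M s (approximant φ n)) :
    FOSat M s (approximant φ m) :=
  (EG_init_iff M φ s m).mp (EG_mono_le hnm ((EG_init_iff M φ s n).mpr h))

lemma eventually_ge_ultra (F : Ultrafilter ℕ) (hF : (F : Filter ℕ) ≤ Filter.cofinite)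
    (n : ℕ) : ∀ᶠ i in (F : Filter ℕ), n ≤ i := by
  apply hF
  rw [Filter.mem_cofinite]
  refine Set.Finite.subset (Set.finite_lt_nat n) ?_
  intro i hi
  simpa [Nat.not_le] using hi

end Assembly

/-- Suppose the sentence `φ` is determined everywhere: in
every suitable model exactly one of Eloise and Abelard has a winning strategy
in the semantic game for `φ` (under unbounded semantics for SCL, resp. under
bounded semantics for BndSCL).  Then there is some `n ∈ ℕ` such that `φ` is
equivalent to its `n`-th approximant `Φⁿ_φ`; in particular `φ` is equivalent
to a first-order sentence. -/
theorem determined_everywhere_implies_first_order {V : Vocab}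
    (φ : SCLFormula V) (hφ : φ.freeVars = ∅) :
    ((∀ (M : Struct.{u} V) (s : ℕ → M.Dom),
        ((gameU M).HasWinningStrategy .eloise (initPos φ s) ∨
          (gameU M).HasWinningStrategy .abelard (initPos φ s)) ∧
        ¬ ((gameU M).HasWinningStrategy .eloise (initPos φ s) ∧
            (gameU M).HasWinningStrategy .abelard (initPos φ s))) →
      ∃ n : ℕ, (approximant φ n).IsFO ∧
        ∀ (M : Struct.{u} V) (s : ℕ → M.Dom),
          SCLTrue M s φ ↔ FOSat M s (approximant φ n)) ∧
    ((∀ (M : Struct.{u} V) (s : ℕ → M.Dom),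
        ((gameOmega M φ s).HasWinningStrategy .eloise .start ∨
          (gameOmega M φ s).HasWinningStrategy .abelard .start) ∧
        ¬ ((gameOmega M φ s).HasWinningStrategy .eloise .start ∧
            (gameOmega M φ s).HasWinningStrategy .abelard .start)) →
      ∃ n : ℕ, (approximant φ n).IsFO ∧
        ∀ (M : Struct.{u} V) (s : ℕ → M.Dom),
          BndTrue M s φ ↔ FOSat M s (approximant φ n)) := by
  classical
  constructor
  · -- Part 1: SCL (unbounded semantics)
    intro hdet
    by_contra hno
    push_neg at hno
    have hfail : ∀ n : ℕ, ∃ (M : Struct.{u} V) (s : ℕ → M.Dom),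
        SCLTrue M s φ ∧ ¬ FOSat M s (approximant φ n) := by
      intro n
      obtain ⟨M, s, hMs⟩ := hno n (approximant_isFO φ n)
      rcases hMs with ⟨h1, h2⟩ | ⟨h1, h2⟩
      · exact ⟨M, s, h1, h2⟩
      · exact absurd (eloiseU_of_EG φ s n ((EG_init_iff M φ s n).mpr h2)) h1
    choose Mf sf hT hF using hfail
    have hcofNe : (Filter.cofinite : Filter ℕ).NeBot := by
      rw [Nat.cofinite_eq_atTop]; exact Filter.atTop_neBot
    set F : Ultrafilter ℕ := Ultrafilter.of Filter.cofinite with hFdef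
    have hFle : (F : Filter ℕ) ≤ Filter.cofinite := Ultrafilter.of_le _
    set sN : ℕ → (uStruct Mf F).Dom :=
      fun v => Quotient.mk (uSetoid Mf F) (fun i => sf i v) with hsNdef
    have htrans : ∀ (θ : SCLFormula V), θ.IsFO →
        ((FOSat (uStruct Mf F) sN θ) ↔ ∀ᶠ i in (F : Filter ℕ), FOSat (Mf i) (sf i) θ) := by
      intro θ hθ
      rw [los Mf F θ hθ sN]
      have hagree : ∀ᶠ i in (F : Filter ℕ), ∀ v ∈ θ.freeVars, uAsg Mf F sN i v = sf i v := by
        rw [Filter.eventually_all_finset]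
        intro v _
        exact uOut_mk Mf F (fun i => sf i v)
      constructor
      · intro h
        exact (h.and hagree).mono fun i hi => (FOSat_congr (Mf i) θ hθ _ _ hi.2).mp hi.1
      · intro h
        exact (h.and hagree).mono fun i hi => (FOSat_congr (Mf i) θ hθ _ _ hi.2).mpr hi.1
    have hnEG : ∀ n, ¬ EG (uStruct Mf F) n (fun _ => none) sN true φ := by
      intro n hEG
      rw [EG_init_iff] at hEG
      rw [approximant_eq_APX] at hEG
      rw [htrans _ (APX_isFO _ dE_isFO n φ _ _)] at hEG
      obtain ⟨i, hi1, hi2⟩ := (hEG.and (eventually_ge_ultra F hFle n)).exists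
      apply hF i
      apply FOSat_approximant_mono (Mf i) φ (sf i) hi2
      rw [approximant_eq_APX]
      exact hi1
    have hnAG : ∀ n, ¬ AG (uStruct Mf F) n (fun _ => none) sN true φ := by
      intro n
      rw [AG_true_iff, not_not]
      rw [htrans _ (APX_isFO _ dA_isFO n φ _ _)]
      refine Filter.Eventually.of_forall fun i => ?_
      by_contra hcon
      have hAG : AG (Mf i) n (fun _ => none) (sf i) true φ := (AG_true_iff _ _ _ _).mpr hcon
      exact not_eloiseU_of_AG φ (sf i) n hAG (hT i)
    have hsatN : SatStruct (uStruct Mf F) := uStruct_satStruct Mf F hFle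
    have hnE := not_eloiseU_of_not_EG hsatN φ sN hnEG
    have hnA := not_abelardU_of_not_AG hsatN φ sN hnAG
    obtain ⟨hEA, _⟩ := hdet (uStruct Mf F) sN
    rcases hEA with hE | hA
    · exact hnE hE
    · exact hnA hA
  · -- Part 2: BndSCL (bounded semantics)
    intro hdet
    by_contra hno
    push_neg at hno
    have hfail : ∀ n : ℕ, ∃ (M : Struct.{u} V) (s : ℕ → M.Dom),
        BndTrue M s φ ∧ ¬ FOSat M s (approximant φ n) := by
      intro n
      obtain ⟨M, s, hMs⟩ := hno n (approximant_isFO φ n)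
      rcases hMs with ⟨h1, h2⟩ | ⟨h1, h2⟩
      · exact ⟨M, s, h1, h2⟩
      · exact absurd (eloiseO_of_EG φ s n ((EG_init_iff M φ s n).mpr h2)) h1
    choose Mf sf hT hF using hfail
    have hcofNe : (Filter.cofinite : Filter ℕ).NeBot := by
      rw [Nat.cofinite_eq_atTop]; exact Filter.atTop_neBot
    set F : Ultrafilter ℕ := Ultrafilter.of Filter.cofinite with hFdef
    have hFle : (F : Filter ℕ) ≤ Filter.cofinite := Ultrafilter.of_le _
    set sN : ℕ → (uStruct Mf F).Dom :=
      fun v => Quotient.mk (uSetoid Mf F) (fun i => sf i v) with hsNdef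
    have htrans : ∀ (θ : SCLFormula V), θ.IsFO →
        ((FOSat (uStruct Mf F) sN θ) ↔ ∀ᶠ i in (F : Filter ℕ), FOSat (Mf i) (sf i) θ) := by
      intro θ hθ
      rw [los Mf F θ hθ sN]
      have hagree : ∀ᶠ i in (F : Filter ℕ), ∀ v ∈ θ.freeVars, uAsg Mf F sN i v = sf i v := by
        rw [Filter.eventually_all_finset]
        intro v _
        exact uOut_mk Mf F (fun i => sf i v)
      constructor
      · intro h
        exact (h.and hagree).mono fun i hi => (FOSat_congr (Mf i) θ hθ _ _ hi.2).mp hi.1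
      · intro h
        exact (h.and hagree).mono fun i hi => (FOSat_congr (Mf i) θ hθ _ _ hi.2).mpr hi.1
    have hnEG : ∀ n, ¬ EG (uStruct Mf F) n (fun _ => none) sN true φ := by
      intro n hEG
      rw [EG_init_iff] at hEG
      rw [approximant_eq_APX] at hEG
      rw [htrans _ (APX_isFO _ dE_isFO n φ _ _)] at hEG
      obtain ⟨i, hi1, hi2⟩ := (hEG.and (eventually_ge_ultra F hFle n)).exists
      apply hF i
      apply FOSat_approximant_mono (Mf i) φ (sf i) hi2
      rw [approximant_eq_APX]
      exact hi1
    have hnAG : ∀ n, ¬ AG (uStruct Mf F) n (fun _ => none) sN true φ := by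
      intro n
      rw [AG_true_iff, not_not]
      rw [htrans _ (APX_isFO _ dA_isFO n φ _ _)]
      refine Filter.Eventually.of_forall fun i => ?_
      by_contra hcon
      have hAG : AG (Mf i) n (fun _ => none) (sf i) true φ := (AG_true_iff _ _ _ _).mpr hcon
      have hnEGi : ∀ m, ¬ EG (Mf i) m (fun _ => none) (sf i) true φ :=
        fun m hEGm => EG_AG_false m n φ _ _ _ hEGm hAG
      exact not_eloiseO_of_not_EG φ (sf i) hnEGi (hT i)
    have hnE := not_eloiseO_of_not_EG φ sN hnEG
    have hnA := not_abelardO_of_not_AG φ sN hnAG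
    obtain ⟨hEA, _⟩ := hdet (uStruct Mf F) sN
    rcases hEA with hE | hA
    · exact hnE hE
    · exact hnA hA
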